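/- arXiv:2011.02653 — 2 statements merged into one kernel-verified Lean document; each statement's English description precedes it below -/
import Mathlib

section
/- If X has the multinomial distribution with n trials and probability vector p, and φ : Z^n → R is a Schur-convex function, then ψ(p) = E_p[φ(X)] is a Schur-convex function of p. -/
open Finset

noncomputable def topSum {n : ℕ} (x : Fin n → ℝ) (k : ℕ) : ℝ :=
  sSup {t : ℝ | ∃ s : Finset (Fin n), s.card = k ∧ t = ∑ i ∈ s, x i}

def Majorizes {n : ℕ} (x y : Fin n → ℝ) : Prop :=
  (∀ k ≤ n, topSum y k ≤ topSum x k) ∧ ∑ i, x i = ∑ i, y i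

def load {n : ℕ} (ω : Fin n → Fin n) (v : Fin n) : ℕ :=
  (Finset.univ.filter fun b => ω b = v).card

namespace SchurAux

variable {n : ℕ}

lemma topSum_finite (x : Fin n → ℝ) (k : ℕ) :
    {t : ℝ | ∃ s : Finset (Fin n), s.card = k ∧ t = ∑ i ∈ s, x i}.Finite := by
  apply Set.Finite.subset (Set.finite_range (fun s : Finset (Fin n) => ∑ i ∈ s, x i))
  rintro t ⟨s, -, rfl⟩; exact ⟨s, rfl⟩

lemma sum_le_topSum (x : Fin n → ℝ) {k : ℕ} {s : Finset (Fin n)} (hs : s.card = k) :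
    ∑ i ∈ s, x i ≤ topSum x k :=
  le_csSup (topSum_finite x k).bddAbove ⟨s, hs, rfl⟩

lemma exists_topSum (x : Fin n → ℝ) {k : ℕ} (hk : k ≤ n) :
    ∃ s : Finset (Fin n), s.card = k ∧ topSum x k = ∑ i ∈ s, x i := by
  have hne : {t : ℝ | ∃ s : Finset (Fin n), s.card = k ∧ t = ∑ i ∈ s, x i}.Nonempty := by
    obtain ⟨s, -, hs⟩ := Finset.exists_subset_card_eq
      (show k ≤ (univ : Finset (Fin n)).card by simpa using hk)
    exact ⟨∑ i ∈ s, x i, s, hs, rfl⟩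
  obtain ⟨s, hs, ht⟩ := hne.csSup_mem (topSum_finite x k)
  exact ⟨s, hs, ht⟩

lemma topSum_comp_perm (x : Fin n → ℝ) (σ : Equiv.Perm (Fin n)) (k : ℕ) :
    topSum (x ∘ σ) k = topSum x k := by
  unfold topSum
  congr 1
  ext t
  constructor
  · rintro ⟨s, hs, rfl⟩
    refine ⟨s.image σ, by rw [Finset.card_image_of_injective _ σ.injective, hs], ?_⟩
    rw [Finset.sum_image (fun a _ b _ h => σ.injective h)]
    rfl
  · rintro ⟨s, hs, rfl⟩
    refine ⟨s.image σ.symm, by rw [Finset.card_image_of_injective _ σ.symm.injective, hs], ?_⟩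
    rw [Finset.sum_image (fun a _ b _ h => σ.symm.injective h)]
    apply Finset.sum_congr rfl
    intro i _
    simp

lemma majorizes_comp_perm (x : Fin n → ℝ) (σ : Equiv.Perm (Fin n)) :
    Majorizes x (x ∘ σ) := by
  constructor
  · intro k hk
    rw [topSum_comp_perm]
  · exact (Equiv.sum_comp σ x).symm

lemma Majorizes.perm {x y : Fin n → ℝ} (h : Majorizes x y) (σ π : Equiv.Perm (Fin n)) :
    Majorizes (x ∘ σ) (y ∘ π) := by
  constructor
  · intro k hk
    rw [topSum_comp_perm, topSum_comp_perm]
    exact h.1 k hk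
  · have h1 : ∑ i, (x ∘ σ) i = ∑ i, x i := Equiv.sum_comp σ x
    have h2 : ∑ i, (y ∘ π) i = ∑ i, y i := Equiv.sum_comp π y
    rw [h1, h2]; exact h.2

/-- A "Robin Hood" transfer is majorized by the original vector. -/
lemma transfer_majorized (x : Fin n → ℝ) {i0 j0 : Fin n} (hij : i0 ≠ j0) {δ : ℝ}
    (hδ0 : 0 ≤ δ) (hδ : x j0 + δ ≤ x i0) :
    Majorizes x (Function.update (Function.update x i0 (x i0 - δ)) j0 (x j0 + δ)) := by
  set y := Function.update (Function.update x i0 (x i0 - δ)) j0 (x j0 + δ) with hy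
  have hyj : y j0 = x j0 + δ := by simp [hy]
  have hyi : y i0 = x i0 - δ := by simp [hy, Function.update_of_ne hij]
  have hyo : ∀ v, v ≠ i0 → v ≠ j0 → y v = x v := by
    intro v hvi hvj
    simp [hy, Function.update_of_ne hvj, Function.update_of_ne hvi]
  have hsum : ∀ s : Finset (Fin n), i0 ∈ s → j0 ∈ s → ∑ i ∈ s, y i = ∑ i ∈ s, x i := by
    intro s hi hj
    rw [Finset.sum_update_of_mem hj, Finset.sum_update_of_mem (by simp [hi, hij] :
      i0 ∈ s \ {j0})]
    rw [Finset.sum_eq_add_sum_sdiff_singleton_of_mem hj x, Finset.sum_eq_add_sum_sdiff_singleton_of_mem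
      (by simp [hi, hij] : i0 ∈ s \ {j0}) x]
    ring_nf
  constructor
  · intro k hk
    obtain ⟨s, hs, hts⟩ := exists_topSum y hk
    rw [hts]
    by_cases hj : j0 ∈ s
    · by_cases hi : i0 ∈ s
      · rw [hsum s hi hj]; exact sum_le_topSum x hs
      · -- j0 ∈ s, i0 ∉ s : swap j0 for i0
        have hswap : ∑ i ∈ s, y i ≤ ∑ i ∈ insert i0 (s.erase j0), x i := by
          rw [Finset.sum_insert (by simp [hi] : i0 ∉ s.erase j0),
            Finset.sum_eq_add_sum_sdiff_singleton_of_mem hj y]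
          have : ∑ i ∈ s \ {j0}, y i = ∑ i ∈ s \ {j0}, x i := by
            apply Finset.sum_congr rfl
            intro v hv
            rw [Finset.mem_sdiff, Finset.mem_singleton] at hv
            exact hyo v (fun h => hi (h ▸ hv.1)) hv.2
          rw [hyj, this, Finset.erase_eq]
          linarith
        refine hswap.trans (sum_le_topSum x ?_)
        have hk1 : 1 ≤ k := hs ▸ Finset.card_pos.mpr ⟨j0, hj⟩
        rw [Finset.card_insert_of_notMem (by simp [hi]), Finset.card_erase_of_mem hj, hs]
        omega
    · have : ∑ i ∈ s, y i ≤ ∑ i ∈ s, x i := by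
        apply Finset.sum_le_sum
        intro v hv
        by_cases hvi : v = i0
        · subst hvi; rw [hyi]; linarith
        · rw [hyo v hvi (fun h => hj (h ▸ hv))]
      exact this.trans (sum_le_topSum x hs)
  · have h1 : ∑ i, y i = ∑ i ∈ Finset.univ, x i := hsum Finset.univ (Finset.mem_univ _) (Finset.mem_univ _)
    rw [h1]

section Load

lemma prod_load (p : Fin n → ℝ) (ω : Fin n → Fin n) :
    ∏ b, p (ω b) = ∏ v, p v ^ load ω v := by
  rw [Finset.prod_comp p ω]
  apply Finset.prod_subset (Finset.subset_univ _)
  intro v _ hv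
  have h0 : (Finset.univ.filter fun b => ω b = v) = ∅ := by
    rw [Finset.filter_eq_empty_iff]
    intro b _
    exact fun h => hv (Finset.mem_image.2 ⟨b, Finset.mem_univ b, h⟩)
  rw [h0]
  simp

lemma load_comp (σ : Equiv.Perm (Fin n)) (ω : Fin n → Fin n) (v : Fin n) :
    load (σ ∘ ω) v = load ω (σ.symm v) := by
  unfold load
  congr 1
  ext b
  simp [Equiv.eq_symm_apply, eq_comm]

lemma load_update_self {ω : Fin n → Fin n} {b i0 : Fin n} (hb : ω b = i0) (j0 : Fin n)
    (hij : i0 ≠ j0) :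
    load (Function.update ω b j0) i0 = load ω i0 - 1 ∧ 1 ≤ load ω i0 := by
  have h1 : 1 ≤ load ω i0 :=
    Finset.card_pos.2 ⟨b, by simp [load, hb]⟩
  refine ⟨?_, h1⟩
  unfold load
  have : (Finset.univ.filter fun b' => Function.update ω b j0 b' = i0)
      = (Finset.univ.filter fun b' => ω b' = i0).erase b := by
    ext b'
    by_cases hb' : b' = b
    · subst hb'; simp [Function.update_self, hij.symm]
    · simp [Function.update_of_ne hb', hb']
  rw [this, Finset.card_erase_of_mem (by simp [hb])]

lemma load_update_target {ω : Fin n → Fin n} {b i0 : Fin n} (hb : ω b = i0) (j0 : Fin n)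
    (hij : i0 ≠ j0) :
    load (Function.update ω b j0) j0 = load ω j0 + 1 := by
  unfold load
  have : (Finset.univ.filter fun b' => Function.update ω b j0 b' = j0)
      = insert b (Finset.univ.filter fun b' => ω b' = j0) := by
    ext b'
    by_cases hb' : b' = b
    · subst hb'; simp [Function.update_self]
    · simp [Function.update_of_ne hb', hb']
  rw [this, Finset.card_insert_of_notMem (by simp [hb, hij])]

lemma load_update_other {ω : Fin n → Fin n} {b : Fin n} (j0 : Fin n) {v : Fin n}
    (hvb : v ≠ ω b) (hvj : v ≠ j0) :
    load (Function.update ω b j0) v = load ω v := by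
  unfold load
  congr 1
  ext b'
  by_cases hb' : b' = b
  · subst hb'
    simp [Function.update_self, hvj.symm]
    exact fun h => hvb h.symm
  · simp [Function.update_of_ne hb']

end Load

section Phi

variable (φ : (Fin n → ℕ) → ℝ)

lemma phi_perm (hφ : ∀ a b : Fin n → ℕ,
      Majorizes (fun i => (a i : ℝ)) (fun i => (b i : ℝ)) → φ b ≤ φ a) (x : Fin n → ℕ) (σ : Equiv.Perm (Fin n)) : φ (x ∘ σ) = φ x := by
  have h1 : Majorizes (fun i => ((x i : ℝ))) (fun i => (((x ∘ σ) i : ℝ))) :=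
    majorizes_comp_perm (fun i => (x i : ℝ)) σ
  have h2 := majorizes_comp_perm (fun i => (((x ∘ σ) i : ℝ))) σ.symm
  have e : (fun i => (((x ∘ σ) i : ℝ))) ∘ σ.symm = fun i => (x i : ℝ) := by
    funext i; simp
  rw [e] at h2
  exact le_antisymm (hφ x (x ∘ σ) h1) (hφ (x ∘ σ) x h2)

noncomputable def psiSum (φ : (Fin n → ℕ) → ℝ) (p : Fin n → ℝ) : ℝ :=
  ∑ ω : Fin n → Fin n, (∏ b, p (ω b)) * φ (load ω)

lemma psiSum_comp_perm (hφ : ∀ a b : Fin n → ℕ,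
      Majorizes (fun i => (a i : ℝ)) (fun i => (b i : ℝ)) → φ b ≤ φ a) (p : Fin n → ℝ) (σ : Equiv.Perm (Fin n)) :
    psiSum φ (p ∘ σ) = psiSum φ p := by
  unfold psiSum
  apply Fintype.sum_equiv (Equiv.arrowCongr (Equiv.refl (Fin n)) σ)
  intro ω
  have he : (Equiv.arrowCongr (Equiv.refl (Fin n)) σ) ω = σ ∘ ω := by
    funext b; simp [Equiv.arrowCongr]
  rw [he]
  have hl : load (σ ∘ ω) = (load ω) ∘ σ.symm := funext fun v => load_comp σ ω v
  have hφp : φ (load (σ ∘ ω)) = φ (load ω) := by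
    rw [hl]; exact phi_perm φ hφ (load ω) σ.symm
  rw [hφp]
  rfl

lemma cast_load_update {ω : Fin n → Fin n} {b i0 j0 : Fin n} (hb : ω b = i0) (hij : i0 ≠ j0) :
    (fun v => (load (Function.update ω b j0) v : ℝ)) =
      Function.update (Function.update (fun v => (load ω v : ℝ)) i0 ((load ω i0 : ℝ) - 1)) j0
        ((load ω j0 : ℝ) + 1) := by
  obtain ⟨ha1, ha2⟩ := load_update_self hb j0 hij
  have hc1 := load_update_target hb j0 hij
  funext v
  by_cases hvj : v = j0
  · subst hvj
    rw [hc1, Function.update_self]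
    push_cast
    ring
  · by_cases hvi : v = i0
    · subst hvi
      rw [ha1, Function.update_of_ne hvj, Function.update_self, Nat.cast_sub ha2]
      norm_num
    · rw [load_update_other j0 (fun h => hvi (h.trans hb)) hvj,
        Function.update_of_ne hvj, Function.update_of_ne hvi]

lemma phi_move_le (hφ : ∀ a b : Fin n → ℕ,
      Majorizes (fun i => (a i : ℝ)) (fun i => (b i : ℝ)) → φ b ≤ φ a) {ω : Fin n → Fin n} {b i0 j0 : Fin n} (hb : ω b = i0) (hij : i0 ≠ j0)
    (hac : load ω j0 + 1 ≤ load ω i0) :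
    φ (load (Function.update ω b j0)) ≤ φ (load ω) := by
  apply hφ
  have key := transfer_majorized (fun v => (load ω v : ℝ)) hij
    (by norm_num : (0:ℝ) ≤ 1) (show (load ω j0 : ℝ) + 1 ≤ (load ω i0 : ℝ) by exact_mod_cast hac)
  rw [cast_load_update hb hij]
  exact key

lemma phi_move_ge (hφ : ∀ a b : Fin n → ℕ,
      Majorizes (fun i => (a i : ℝ)) (fun i => (b i : ℝ)) → φ b ≤ φ a) {ω : Fin n → Fin n} {b i0 j0 : Fin n} (hb : ω b = i0) (hij : i0 ≠ j0)
    (hca : load ω i0 ≤ load ω j0 + 1) :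
    φ (load ω) ≤ φ (load (Function.update ω b j0)) := by
  set ω' := Function.update ω b j0 with hω'
  obtain ⟨ha1, ha2⟩ := load_update_self hb j0 hij
  have hc1 : load ω' j0 = load ω j0 + 1 := load_update_target hb j0 hij
  apply hφ
  have hcond : (load ω' i0 : ℝ) + 1 ≤ (load ω' j0 : ℝ) := by
    rw [ha1, hc1, Nat.cast_sub ha2]
    push_cast
    have : (load ω i0 : ℝ) ≤ (load ω j0 : ℝ) + 1 := by exact_mod_cast hca
    linarith
  have key := transfer_majorized (fun v => (load ω' v : ℝ)) hij.symm
    (by norm_num : (0:ℝ) ≤ 1) hcond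
  have e : (Function.update (Function.update (fun v => (load ω' v : ℝ)) j0
      ((load ω' j0 : ℝ) - 1)) i0 ((load ω' i0 : ℝ) + 1)) = fun v => (load ω v : ℝ) := by
    funext v
    by_cases hvi : v = i0
    · subst hvi
      rw [Function.update_self, ha1, Nat.cast_sub ha2]
      ring
    · by_cases hvj : v = j0
      · subst hvj
        rw [Function.update_of_ne (fun h => hvi h), Function.update_self, hc1]
        push_cast
        ring
      · rw [Function.update_of_ne hvi, Function.update_of_ne hvj]
        rw [hω', load_update_other j0 (fun h => hvi (h.trans hb)) hvj]
  rw [e] at key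
  exact key

end Phi

section Step

variable (φ : (Fin n → ℕ) → ℝ)

lemma fiber_sum (X : (Fin n → Fin n) → ℝ) (v0 : Fin n) :
    ∑ z ∈ Finset.univ.filter (fun z : (Fin n → Fin n) × Fin n => z.1 z.2 = v0), X z.1
      = ∑ ω : Fin n → Fin n, (load ω v0 : ℝ) * X ω := by
  rw [Finset.sum_filter, Fintype.sum_prod_type]
  apply Finset.sum_congr rfl
  intro ω _
  have hb : ∀ a : Fin n, (if (ω, a).1 (ω, a).2 = v0 then X (ω, a).1 else 0)
      = (if ω a = v0 then X ω else 0) := fun a => rfl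
  simp only [hb]
  rw [← Finset.sum_filter, Finset.sum_const]
  simp [load, nsmul_eq_mul]

lemma step_half (hφ : ∀ a b : Fin n → ℕ,
      Majorizes (fun i => (a i : ℝ)) (fun i => (b i : ℝ)) → φ b ≤ φ a)
    {i0 j0 : Fin n} (hij : i0 ≠ j0) (p : Fin n → ℝ) (hp : ∀ v, 0 ≤ p v)
    {δ : ℝ} (h0 : 0 ≤ δ) (h1 : 2 * δ ≤ p i0 - p j0) :
    psiSum φ (Function.update (Function.update p i0 (p i0 - δ)) j0 (p j0 + δ)) ≤ psiSum φ p := by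
  classical
  set W : (Fin n → Fin n) → ℝ :=
    fun ω => ∏ v ∈ (Finset.univ.erase j0).erase i0, p v ^ load ω v with hW
  have hWnn : ∀ ω, 0 ≤ W ω := fun ω => Finset.prod_nonneg fun v _ => pow_nonneg (hp v) _
  set C : (Fin n → Fin n) → ℝ := fun ω => W ω * φ (load ω) with hC
  set F : ℝ → ℝ :=
    fun t => ∑ ω : Fin n → Fin n, C ω * ((p i0 - t) ^ load ω i0 * (p j0 + t) ^ load ω j0)
    with hFdef
  -- Step A : psiSum of the transferred vector equals F t
  have stepA : ∀ t : ℝ,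
      psiSum φ (Function.update (Function.update p i0 (p i0 - t)) j0 (p j0 + t)) = F t := by
    intro t
    set pt := Function.update (Function.update p i0 (p i0 - t)) j0 (p j0 + t) with hpt
    have hpti : pt i0 = p i0 - t := by simp [hpt, Function.update_of_ne hij]
    have hptj : pt j0 = p j0 + t := by simp [hpt]
    have hpto : ∀ v, v ≠ i0 → v ≠ j0 → pt v = p v := by
      intro v hvi hvj
      simp [hpt, Function.update_of_ne hvj, Function.update_of_ne hvi]
    unfold psiSum
    apply Finset.sum_congr rfl
    intro ω _
    rw [prod_load pt ω]
    have e1 : ∏ v, pt v ^ load ω v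
        = pt j0 ^ load ω j0 * ∏ v ∈ Finset.univ.erase j0, pt v ^ load ω v :=
      (Finset.mul_prod_erase Finset.univ _ (Finset.mem_univ j0)).symm
    have e2 : ∏ v ∈ Finset.univ.erase j0, pt v ^ load ω v
        = pt i0 ^ load ω i0 * ∏ v ∈ (Finset.univ.erase j0).erase i0, pt v ^ load ω v :=
      (Finset.mul_prod_erase _ _ (by simp [hij] : i0 ∈ Finset.univ.erase j0)).symm
    have e3 : ∏ v ∈ (Finset.univ.erase j0).erase i0, pt v ^ load ω v = W ω := by
      apply Finset.prod_congr rfl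
      intro v hv
      rw [Finset.mem_erase, Finset.mem_erase] at hv
      rw [hpto v hv.1 hv.2.1]
    rw [e1, e2, e3, hpti, hptj]
    ring
  -- Step B : derivative of F
  set G : ℝ → ℝ := fun t => ∑ ω : Fin n → Fin n, C ω *
      ((load ω j0 : ℝ) * (p j0 + t) ^ (load ω j0 - 1) * (p i0 - t) ^ load ω i0
        - (load ω i0 : ℝ) * (p i0 - t) ^ (load ω i0 - 1) * (p j0 + t) ^ load ω j0)
    with hG
  have hF : ∀ t : ℝ, HasDerivAt F (G t) t := by
    intro t
    apply HasDerivAt.fun_sum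
    intro ω _
    have hu : HasDerivAt (fun t : ℝ => (p i0 - t) ^ load ω i0)
        (((load ω i0 : ℝ)) * (p i0 - t) ^ (load ω i0 - 1) * (-1)) t :=
      ((hasDerivAt_id t).const_sub (p i0)).pow _
    have hvv : HasDerivAt (fun t : ℝ => (p j0 + t) ^ load ω j0)
        (((load ω j0 : ℝ)) * (p j0 + t) ^ (load ω j0 - 1) * 1) t :=
      ((hasDerivAt_id t).const_add (p j0)).pow _
    have := (hu.fun_mul hvv).const_mul (C ω)
    exact this.congr_deriv (by ring)
  -- Step C : the derivative is nonpositive when `0 ≤ p j0 + t ≤ p i0 - t`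
  have stepC : ∀ t : ℝ, 0 ≤ p j0 + t → p j0 + t ≤ p i0 - t → G t ≤ 0 := by
    intro t hv0 hvu
    set u : ℝ := p i0 - t with hu
    set v : ℝ := p j0 + t with hv
    set τ : Equiv.Perm (Fin n) := Equiv.swap i0 j0 with hτ
    set Si := Finset.univ.filter (fun z : (Fin n → Fin n) × Fin n => z.1 z.2 = i0) with hSi
    set Sj := Finset.univ.filter (fun z : (Fin n → Fin n) × Fin n => z.1 z.2 = j0) with hSj
    -- facts about W
    have hWup : ∀ (ω : Fin n → Fin n) (b : Fin n), ω b = i0 →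
        W (Function.update ω b j0) = W ω := by
      intro ω b hb
      apply Finset.prod_congr rfl
      intro w hw
      rw [Finset.mem_erase, Finset.mem_erase] at hw
      rw [load_update_other j0 (fun h => hw.1 (h.trans hb)) hw.2.1]
    have hWswap : ∀ ω : Fin n → Fin n, W (τ ∘ ω) = W ω := by
      intro ω
      apply Finset.prod_congr rfl
      intro w hw
      rw [Finset.mem_erase, Finset.mem_erase] at hw
      rw [load_comp]
      congr 1
      rw [hτ]
      simp [Equiv.swap_apply_of_ne_of_ne hw.1 hw.2.1]
    -- rewrite G as a single sum over Si
    have hGsplit : G t = (∑ z ∈ Sj, C z.1 * (v ^ (load z.1 j0 - 1) * u ^ load z.1 i0))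
        - ∑ z ∈ Si, C z.1 * (u ^ (load z.1 i0 - 1) * v ^ load z.1 j0) := by
      rw [hG, fiber_sum (fun ω => C ω * (v ^ (load ω j0 - 1) * u ^ load ω i0)) j0,
        fiber_sum (fun ω => C ω * (u ^ (load ω i0 - 1) * v ^ load ω j0)) i0,
        ← Finset.sum_sub_distrib]
      apply Finset.sum_congr rfl
      intro ω _
      ring
    have hreindex : ∑ z ∈ Sj, C z.1 * (v ^ (load z.1 j0 - 1) * u ^ load z.1 i0)
        = ∑ z ∈ Si, C (Function.update z.1 z.2 j0)
            * (v ^ (load (Function.update z.1 z.2 j0) j0 - 1)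
              * u ^ load (Function.update z.1 z.2 j0) i0) := by
      apply Finset.sum_nbij'
        (fun z : (Fin n → Fin n) × Fin n => (Function.update z.1 z.2 i0, z.2))
        (fun z : (Fin n → Fin n) × Fin n => (Function.update z.1 z.2 j0, z.2))
      · intro z hz
        rw [hSi] at *
        simp
      · intro z hz
        rw [hSj] at *
        simp
      · intro z hz
        rw [hSj, Finset.mem_filter] at hz
        have : Function.update (Function.update z.1 z.2 i0) z.2 j0 = z.1 := by
          rw [Function.update_idem, ← hz.2, Function.update_eq_self]
        simp [this]
      · intro z hz
        rw [hSi, Finset.mem_filter] at hz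
        have : Function.update (Function.update z.1 z.2 j0) z.2 i0 = z.1 := by
          rw [Function.update_idem, ← hz.2, Function.update_eq_self]
        simp [this]
      · intro z hz
        rw [hSj, Finset.mem_filter] at hz
        have e : Function.update (Function.update z.1 z.2 i0) z.2 j0 = z.1 := by
          rw [Function.update_idem, ← hz.2, Function.update_eq_self]
        rw [e]
    set H : ((Fin n → Fin n) × Fin n) → ℝ := fun z =>
      W z.1 * (u ^ (load z.1 i0 - 1) * v ^ load z.1 j0)
        * (φ (load (Function.update z.1 z.2 j0)) - φ (load z.1)) with hH
    have hGH : G t = ∑ z ∈ Si, H z := by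
      rw [hGsplit, hreindex, ← Finset.sum_sub_distrib]
      apply Finset.sum_congr rfl
      intro z hz
      rw [hSi, Finset.mem_filter] at hz
      obtain ⟨-, hb⟩ := hz
      obtain ⟨hself, hone⟩ := load_update_self hb j0 hij
      have htar := load_update_target hb j0 hij
      simp only [hH, hC]
      rw [hWup z.1 z.2 hb, hself, htar]
      have h11 : load z.1 j0 + 1 - 1 = load z.1 j0 := by omega
      rw [h11]
      ring
    -- the involution
    set E : ((Fin n → Fin n) × Fin n) → ((Fin n → Fin n) × Fin n) :=
      fun z : (Fin n → Fin n) × Fin n => (Function.update (⇑τ ∘ z.1) z.2 i0, z.2) with hE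
    have hEmem : ∀ z ∈ Si, E z ∈ Si := by
      intro z hz
      rw [hSi] at *
      simp [hE]
    have hEinv : ∀ z ∈ Si, E (E z) = z := by
      intro z hz
      rw [hSi, Finset.mem_filter] at hz
      obtain ⟨-, hb⟩ := hz
      rw [hE]
      have e1 : τ ∘ (Function.update (τ ∘ z.1) z.2 i0) = Function.update z.1 z.2 j0 := by
        rw [Function.comp_update]
        have : τ ∘ (τ ∘ z.1) = z.1 := by
          funext b; simp [hτ, Equiv.swap_apply_self]
        rw [this]
        congr 1
        simp [hτ]
      simp only [e1]
      have : Function.update (Function.update z.1 z.2 j0) z.2 i0 = z.1 := by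
        rw [Function.update_idem, ← hb, Function.update_eq_self]
      simp [this]
    have hEsum : ∑ z ∈ Si, H z = ∑ z ∈ Si, H (E z) :=
      Finset.sum_nbij' E E hEmem hEmem hEinv hEinv (fun z hz => by rw [hEinv z hz])
    -- pointwise bound
    have hpoint : ∀ z ∈ Si, H z + H (E z) ≤ 0 := by
      rintro ⟨ω, b⟩ hz
      rw [hSi, Finset.mem_filter] at hz
      have hb : ω b = i0 := hz.2
      set a := load ω i0 with ha
      set c := load ω j0 with hc
      obtain ⟨hself, hone⟩ := load_update_self hb j0 hij
      have htar := load_update_target hb j0 hij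
      set ω' := Function.update ω b j0 with hω'
      have hτb : (⇑τ ∘ ω) b = j0 := by simp [hτ, hb]
      have hl2i : load (Function.update (⇑τ ∘ ω) b i0) i0 = c + 1 := by
        rw [load_update_target hτb i0 (Ne.symm hij), load_comp]
        congr 1
        simp [hτ]
        exact hc.symm
      have hl2j : load (Function.update (⇑τ ∘ ω) b i0) j0 = a - 1 := by
        obtain ⟨h2, -⟩ := load_update_self hτb i0 (Ne.symm hij)
        rw [h2, load_comp]
        congr 1
        simp [hτ]
        exact ha.symm
      have hcomp : ⇑τ ∘ ω' = Function.update (⇑τ ∘ ω) b i0 := by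
        rw [hω', Function.comp_update]
        congr 1
        simp [hτ]
      have hW2 : W (Function.update (⇑τ ∘ ω) b i0) = W ω := by
        rw [← hcomp, hWswap, hω', hWup ω b hb]
      have hφ2 : φ (load (Function.update (⇑τ ∘ ω) b i0)) = φ (load ω') := by
        rw [← hcomp]
        have hlc : load (⇑τ ∘ ω') = (load ω') ∘ ⇑τ.symm := funext fun w => load_comp τ ω' w
        rw [hlc]
        exact phi_perm φ hφ (load ω') τ.symm
      have hupd2 : Function.update (Function.update (⇑τ ∘ ω) b i0) b j0 = ⇑τ ∘ ω := by
        rw [Function.update_idem, ← hτb, Function.update_eq_self]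
      have hφ3 : φ (load (Function.update (Function.update (⇑τ ∘ ω) b i0) b j0))
          = φ (load ω) := by
        rw [hupd2]
        have hlc : load (⇑τ ∘ ω) = (load ω) ∘ ⇑τ.symm := funext fun w => load_comp τ ω w
        rw [hlc]
        exact phi_perm φ hφ (load ω) τ.symm
      have hHz : H (ω, b) = W ω * (u ^ (a - 1) * v ^ c) * (φ (load ω') - φ (load ω)) := by
        simp only [hH]
        rfl
      have hHEz : H (E (ω, b)) = W ω * (u ^ c * v ^ (a - 1)) * (φ (load ω) - φ (load ω')) := by
        simp only [hH, hE]
        rw [hl2i, hl2j, hW2, hφ2, hφ3]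
        have h11 : c + 1 - 1 = c := by omega
        rw [h11]
      have hsum : H (ω, b) + H (E (ω, b))
          = W ω * (u ^ (a - 1) * v ^ c - u ^ c * v ^ (a - 1)) * (φ (load ω') - φ (load ω)) := by
        rw [hHz, hHEz]; ring
      rw [hsum]
      have hu0 : 0 ≤ u := le_trans hv0 hvu
      by_cases hca : c + 1 ≤ a
      · -- spread increases, φ decreases along the move
        have hD : φ (load ω') - φ (load ω) ≤ 0 :=
          sub_nonpos.2 (phi_move_le φ hφ hb hij hca)
        have hfac : 0 ≤ u ^ (a - 1) * v ^ c - u ^ c * v ^ (a - 1) := by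
          have he : a - 1 = c + (a - 1 - c) := by omega
          rw [he, pow_add, pow_add]
          have hpow : v ^ (a - 1 - c) ≤ u ^ (a - 1 - c) := pow_le_pow_left₀ hv0 hvu _
          have h1 : u ^ c * u ^ (a - 1 - c) * v ^ c = (u ^ c * v ^ c) * u ^ (a - 1 - c) := by ring
          have h2 : u ^ c * (v ^ c * v ^ (a - 1 - c)) = (u ^ c * v ^ c) * v ^ (a - 1 - c) := by
            ring
          rw [h1, h2, sub_nonneg]
          exact mul_le_mul_of_nonneg_left hpow (mul_nonneg (pow_nonneg hu0 _) (pow_nonneg hv0 _))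
        exact mul_nonpos_of_nonneg_of_nonpos
          (mul_nonneg (hWnn ω) hfac) hD
      · push_neg at hca
        have hac : a ≤ c := by omega
        have hD : 0 ≤ φ (load ω') - φ (load ω) :=
          sub_nonneg.2 (phi_move_ge φ hφ hb hij (by omega))
        have hfac : u ^ (a - 1) * v ^ c - u ^ c * v ^ (a - 1) ≤ 0 := by
          have he : c = (a - 1) + (c + 1 - a) := by omega
          rw [he]
          rw [pow_add, pow_add]
          have hpow : v ^ (c + 1 - a) ≤ u ^ (c + 1 - a) := pow_le_pow_left₀ hv0 hvu _
          have h1 : u ^ (a - 1) * (v ^ (a - 1) * v ^ (c + 1 - a))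
              = (u ^ (a - 1) * v ^ (a - 1)) * v ^ (c + 1 - a) := by ring
          have h2 : u ^ (a - 1) * u ^ (c + 1 - a) * v ^ (a - 1)
              = (u ^ (a - 1) * v ^ (a - 1)) * u ^ (c + 1 - a) := by ring
          rw [h1, h2, sub_nonpos]
          exact mul_le_mul_of_nonneg_left hpow
            (mul_nonneg (pow_nonneg hu0 _) (pow_nonneg hv0 _))
        exact mul_nonpos_of_nonpos_of_nonneg
          (mul_nonpos_of_nonneg_of_nonpos (hWnn ω) hfac) hD
    have h2 : (∑ z ∈ Si, H z) + (∑ z ∈ Si, H z) ≤ 0 := by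
      nth_rewrite 2 [hEsum]
      rw [← Finset.sum_add_distrib]
      exact Finset.sum_nonpos hpoint
    rw [hGH]
    linarith
  -- Step D : conclude by monotonicity
  set T : ℝ := (p i0 - p j0) / 2 with hT
  have hδT : δ ≤ T := by rw [hT]; linarith
  have hT0 : 0 ≤ T := le_trans h0 hδT
  have hanti : AntitoneOn F (Set.Icc 0 T) := by
    apply antitoneOn_of_deriv_nonpos (convex_Icc 0 T)
    · exact (Differentiable.continuous (fun t => (hF t).differentiableAt)).continuousOn
    · intro t ht
      exact (hF t).differentiableAt.differentiableWithinAt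
    · intro t ht
      rw [interior_Icc] at ht
      rw [(hF t).deriv]
      apply stepC
      · have := hp j0; linarith [ht.1]
      · rw [hT] at ht; linarith [ht.2]
  have := hanti (Set.mem_Icc.2 ⟨le_refl 0, hT0⟩) (Set.mem_Icc.2 ⟨h0, hδT⟩) h0
  calc psiSum φ (Function.update (Function.update p i0 (p i0 - δ)) j0 (p j0 + δ))
      = F δ := stepA δ
    _ ≤ F 0 := this
    _ = psiSum φ p := by
        rw [← stepA 0]
        congr 1
        rw [sub_zero, add_zero, Function.update_eq_self]
        rw [Function.update_eq_self]

end Step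

section StepFull

variable (φ : (Fin n → ℕ) → ℝ)

lemma step_full (hφ : ∀ a b : Fin n → ℕ,
      Majorizes (fun i => (a i : ℝ)) (fun i => (b i : ℝ)) → φ b ≤ φ a)
    {i0 j0 : Fin n} (hij : i0 ≠ j0) (p : Fin n → ℝ) (hp : ∀ v, 0 ≤ p v)
    {δ : ℝ} (h0 : 0 ≤ δ) (h1 : δ ≤ p i0 - p j0) :
    psiSum φ (Function.update (Function.update p i0 (p i0 - δ)) j0 (p j0 + δ)) ≤ psiSum φ p := by
  by_cases hcase : 2 * δ ≤ p i0 - p j0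
  · exact step_half φ hφ hij p hp h0 hcase
  · push_neg at hcase
    set δ' := p i0 - p j0 - δ with hδ'
    have h0' : 0 ≤ δ' := by rw [hδ']; linarith
    have h1' : 2 * δ' ≤ p i0 - p j0 := by rw [hδ']; linarith
    have key := step_half φ hφ hij p hp h0' h1'
    have e : Function.update (Function.update p i0 (p i0 - δ)) j0 (p j0 + δ)
        = (Function.update (Function.update p i0 (p i0 - δ')) j0 (p j0 + δ'))
          ∘ (Equiv.swap i0 j0) := by
      funext v
      have hswr : (Equiv.swap i0 j0) j0 = i0 := Equiv.swap_apply_right i0 j0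
      have hswl : (Equiv.swap i0 j0) i0 = j0 := Equiv.swap_apply_left i0 j0
      by_cases hvj : v = j0
      · rw [hvj, Function.update_self]
        have h2 : ((Function.update (Function.update p i0 (p i0 - δ')) j0 (p j0 + δ'))
            ∘ (Equiv.swap i0 j0)) j0 = p i0 - δ' := by
          show Function.update (Function.update p i0 (p i0 - δ')) j0 (p j0 + δ')
            ((Equiv.swap i0 j0) j0) = _
          rw [hswr, Function.update_of_ne hij, Function.update_self]
        rw [h2, hδ']
        ring
      · by_cases hvi : v = i0
        · rw [hvi, Function.update_of_ne hij, Function.update_self]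
          have h2 : ((Function.update (Function.update p i0 (p i0 - δ')) j0 (p j0 + δ'))
              ∘ (Equiv.swap i0 j0)) i0 = p j0 + δ' := by
            show Function.update (Function.update p i0 (p i0 - δ')) j0 (p j0 + δ')
              ((Equiv.swap i0 j0) i0) = _
            rw [hswl, Function.update_self]
          rw [h2, hδ']
          ring
        · rw [Function.update_of_ne hvj, Function.update_of_ne hvi]
          have h2 : ((Function.update (Function.update p i0 (p i0 - δ')) j0 (p j0 + δ'))
              ∘ (Equiv.swap i0 j0)) v = p v := by
            show Function.update (Function.update p i0 (p i0 - δ')) j0 (p j0 + δ')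
              ((Equiv.swap i0 j0) v) = _
            rw [Equiv.swap_apply_of_ne_of_ne hvi hvj,
              Function.update_of_ne hvj, Function.update_of_ne hvi]
          rw [h2]
    rw [e, psiSum_comp_perm φ hφ]
    exact key

end StepFull

section Prefix

/-- Sum of the first `k` coordinates. -/
def Pre (x : Fin n → ℝ) (k : ℕ) : ℝ :=
  ∑ i ∈ Finset.univ.filter (fun i : Fin n => (i : ℕ) < k), x i

lemma filter_lt_eq_map {k : ℕ} (hk : k ≤ n) :
    (Finset.univ.filter (fun i : Fin n => (i : ℕ) < k))
      = Finset.map (Fin.castLEEmb hk) Finset.univ := by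
  ext i
  simp only [Finset.mem_filter, Finset.mem_univ, true_and, Finset.mem_map]
  constructor
  · intro h
    exact ⟨⟨(i : ℕ), h⟩, by ext; rfl⟩
  · rintro ⟨j, -, rfl⟩
    simpa using j.2

lemma card_filter_lt {k : ℕ} (hk : k ≤ n) :
    (Finset.univ.filter (fun i : Fin n => (i : ℕ) < k)).card = k := by
  rw [filter_lt_eq_map hk, Finset.card_map, Finset.card_univ, Fintype.card_fin]

lemma Pre_eq {k : ℕ} (x : Fin n → ℝ) (hk : k ≤ n) :
    Pre x k = ∑ j : Fin k, x (Fin.castLE hk j) := by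
  rw [Pre, filter_lt_eq_map hk, Finset.sum_map]
  rfl

lemma Pre_succ (x : Fin n → ℝ) {k : ℕ} (hk : k < n) :
    Pre x (k + 1) = Pre x k + x ⟨k, hk⟩ := by
  unfold Pre
  have : (Finset.univ.filter (fun i : Fin n => (i : ℕ) < k + 1))
      = insert (⟨k, hk⟩ : Fin n) (Finset.univ.filter (fun i : Fin n => (i : ℕ) < k)) := by
    ext i
    simp only [Finset.mem_filter, Finset.mem_univ, true_and, Finset.mem_insert]
    constructor
    · intro h
      rcases Nat.lt_succ_iff_lt_or_eq.1 h with h | h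
      · exact Or.inr h
      · exact Or.inl (by ext; exact h)
    · rintro (rfl | h)
      · exact Nat.lt_succ_self k
      · exact Nat.lt_succ_of_lt h
  rw [this, Finset.sum_insert (by simp)]
  ring

lemma topSum_antitone {x : Fin n → ℝ} (hx : Antitone x) {k : ℕ} (hk : k ≤ n) :
    topSum x k = Pre x k := by
  apply le_antisymm
  · obtain ⟨s, hs, ht⟩ := exists_topSum x hk
    rw [ht, Pre_eq x hk]
    set emb := s.orderEmbOfFin hs with hemb
    have hse : s = Finset.univ.map emb.toEmbedding := by
      ext i
      simp only [Finset.mem_map, Finset.mem_univ, true_and]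
      constructor
      · intro hi
        have : i ∈ Set.range emb := by rw [Finset.range_orderEmbOfFin s hs]; exact hi
        obtain ⟨j, hj⟩ := this
        exact ⟨j, hj⟩
      · rintro ⟨j, rfl⟩
        exact Finset.orderEmbOfFin_mem s hs j
    rw [hse, Finset.sum_map]
    apply Finset.sum_le_sum
    intro j _
    apply hx
    -- castLE j ≤ emb j
    have hval : ∀ m : ℕ, ∀ hm : m < k, m ≤ ((emb ⟨m, hm⟩ : Fin n) : ℕ) := by
      intro m
      induction m with
      | zero => intro hm; exact Nat.zero_le _
      | succ m ih =>
        intro hm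
        have hm' : m < k := Nat.lt_of_succ_lt hm
        have h1 : emb ⟨m, hm'⟩ < emb ⟨m + 1, hm⟩ := by
          apply emb.strictMono
          exact Fin.mk_lt_mk.2 (Nat.lt_succ_self m)
        have h2 := ih hm'
        have h3 : ((emb ⟨m, hm'⟩ : Fin n) : ℕ) < ((emb ⟨m + 1, hm⟩ : Fin n) : ℕ) := h1
        omega
    have := hval (j : ℕ) j.2
    rw [Fin.le_def]
    simpa using this
  · exact sum_le_topSum x (card_filter_lt hk)

lemma majorizes_of_pre {x y : Fin n → ℝ} (hx : Antitone x) (hy : Antitone y)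
    (hpre : ∀ k ≤ n, Pre y k ≤ Pre x k) (hsum : ∑ i, x i = ∑ i, y i) :
    Majorizes x y := by
  refine ⟨?_, hsum⟩
  intro k hk
  rw [topSum_antitone hx hk, topSum_antitone hy hk]
  exact hpre k hk

lemma pre_of_majorizes {x y : Fin n → ℝ} (hx : Antitone x) (hy : Antitone y)
    (h : Majorizes x y) : ∀ k ≤ n, Pre y k ≤ Pre x k := by
  intro k hk
  rw [← topSum_antitone hx hk, ← topSum_antitone hy hk]
  exact h.1 k hk

end Prefix

section Chain

/-- Sum of a doubly-updated function over any finset. -/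
lemma sum_update2 (x : Fin n → ℝ) {i0 j0 : Fin n} (hij : i0 ≠ j0) (δ : ℝ)
    (s : Finset (Fin n)) :
    ∑ l ∈ s, (Function.update (Function.update x i0 (x i0 - δ)) j0 (x j0 + δ)) l
      = ∑ l ∈ s, x l - (if i0 ∈ s then δ else 0) + (if j0 ∈ s then δ else 0) := by
  set y := Function.update (Function.update x i0 (x i0 - δ)) j0 (x j0 + δ) with hy
  have hyj : y j0 = x j0 + δ := by simp [hy]
  have hyi : y i0 = x i0 - δ := by simp [hy, Function.update_of_ne hij]
  have hyo : ∀ v, v ≠ i0 → v ≠ j0 → y v = x v := by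
    intro v hvi hvj
    simp [hy, Function.update_of_ne hvj, Function.update_of_ne hvi]
  by_cases hi : i0 ∈ s <;> by_cases hj : j0 ∈ s
  · rw [if_pos hi, if_pos hj]
    rw [Finset.sum_eq_add_sum_sdiff_singleton_of_mem hj y,
      Finset.sum_eq_add_sum_sdiff_singleton_of_mem (by simp [hi, hij] : i0 ∈ s \ {j0}) y,
      Finset.sum_eq_add_sum_sdiff_singleton_of_mem hj x,
      Finset.sum_eq_add_sum_sdiff_singleton_of_mem (by simp [hi, hij] : i0 ∈ s \ {j0}) x]
    have he : ∑ l ∈ (s \ {j0}) \ {i0}, y l = ∑ l ∈ (s \ {j0}) \ {i0}, x l := by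
      apply Finset.sum_congr rfl
      intro v hv
      rw [Finset.mem_sdiff, Finset.mem_sdiff, Finset.mem_singleton, Finset.mem_singleton] at hv
      exact hyo v hv.2 hv.1.2
    rw [he, hyj, hyi]
    ring
  · rw [if_pos hi, if_neg hj]
    rw [Finset.sum_eq_add_sum_sdiff_singleton_of_mem hi y, Finset.sum_eq_add_sum_sdiff_singleton_of_mem hi x]
    have he : ∑ l ∈ s \ {i0}, y l = ∑ l ∈ s \ {i0}, x l := by
      apply Finset.sum_congr rfl
      intro v hv
      rw [Finset.mem_sdiff, Finset.mem_singleton] at hv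
      exact hyo v hv.2 (fun h => hj (h ▸ hv.1))
    rw [he, hyi]
    ring
  · rw [if_neg hi, if_pos hj]
    rw [Finset.sum_eq_add_sum_sdiff_singleton_of_mem hj y, Finset.sum_eq_add_sum_sdiff_singleton_of_mem hj x]
    have he : ∑ l ∈ s \ {j0}, y l = ∑ l ∈ s \ {j0}, x l := by
      apply Finset.sum_congr rfl
      intro v hv
      rw [Finset.mem_sdiff, Finset.mem_singleton] at hv
      exact hyo v (fun h => hi (h ▸ hv.1)) hv.2
    rw [he, hyj]
    ring
  · rw [if_neg hi, if_neg hj]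
    rw [sub_zero, add_zero]
    apply Finset.sum_congr rfl
    intro v hv
    exact hyo v (fun h => hi (h ▸ hv)) (fun h => hj (h ▸ hv))

lemma lexA {A x x' v v' : ℕ} (hv : v' < A) (hx : x' < x) : x' * A + v' < x * A + v := by
  have h1 : (x' + 1) * A ≤ x * A := Nat.mul_le_mul_right A hx
  rw [add_mul, one_mul] at h1
  omega

lemma lexB {A x x' v v' : ℕ} (hx : x' ≤ x) (hv : v' < v) : x' * A + v' < x * A + v := by
  have h1 : x' * A ≤ x * A := Nat.mul_le_mul_right A hx
  omega

lemma lexC {A x x' v v' : ℕ} (hx : x' ≤ x) (hv : v' ≤ v) : x' * A + v' ≤ x * A + v := by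
  have h1 : x' * A ≤ x * A := Nat.mul_le_mul_right A hx
  omega

variable (φ : (Fin n → ℕ) → ℝ)

noncomputable def muM (p q : Fin n → ℝ) : ℕ :=
  (Finset.univ.filter fun l : Fin n => p l < q l).card

noncomputable def kappaM (p q : Fin n → ℝ) : ℕ :=
  (Finset.univ.filter fun l : Fin n => ∃ l', l' ≤ l ∧ p l' ≠ q l').card

noncomputable def nuM (p q : Fin n → ℝ) : ℕ :=
  (Finset.univ.filter fun l : Fin n =>
    ∃ jj : Fin n, (p jj ≠ q jj ∧ ∀ r, r < jj → p r = q r) ∧ q jj < p l).card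

lemma chain (hφ : ∀ a b : Fin n → ℕ,
      Majorizes (fun i => (a i : ℝ)) (fun i => (b i : ℝ)) → φ b ≤ φ a)
    (q : Fin n → ℝ) (hqa : Antitone q) (hq : ∀ v, 0 ≤ q v) :
    ∀ N : ℕ, ∀ p : Fin n → ℝ, Antitone p → (∀ v, 0 ≤ p v) → Majorizes p q →
      (muM p q * (n + 1) + kappaM p q) * (n + 1) + nuM p q ≤ N →
      psiSum φ q ≤ psiSum φ p := by
  intro N
  induction N with
  | zero =>
    intro p hpa hp hpq hm
    have h00 : (muM p q * (n + 1) + kappaM p q) * (n + 1) + nuM p q = 0 := Nat.le_zero.mp hm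
    have h01 : (muM p q * (n + 1) + kappaM p q) * (n + 1) = 0 := by omega
    have h02 : muM p q * (n + 1) + kappaM p q = 0 := by
      rcases Nat.mul_eq_zero.mp h01 with h | h
      · exact h
      · omega
    have hk0 : kappaM p q = 0 := by omega
    have : p = q := by
      funext l
      by_contra h
      have : l ∈ Finset.univ.filter (fun l : Fin n => ∃ l', l' ≤ l ∧ p l' ≠ q l') := by
        simp only [Finset.mem_filter, Finset.mem_univ, true_and]
        exact ⟨l, le_refl l, h⟩
      rw [kappaM, Finset.card_eq_zero] at hk0
      rw [hk0] at this
      exact absurd this (Finset.notMem_empty l)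
    rw [this]
  | succ N ih =>
    intro p hpa hp hpq hm
    by_cases hpq0 : p = q
    · rw [hpq0]
    -- set up the indices
    have hDne : (Finset.univ.filter fun l : Fin n => p l ≠ q l).Nonempty := by
      rcases Function.ne_iff.1 hpq0 with ⟨l, hl⟩
      exact ⟨l, by simp [hl]⟩
    set j := (Finset.univ.filter fun l : Fin n => p l ≠ q l).min' hDne with hjdef
    have hjmem : p j ≠ q j := by
      have := Finset.min'_mem _ hDne
      rw [Finset.mem_filter] at this
      exact this.2
    have hjmin : ∀ l, p l ≠ q l → j ≤ l := fun l hl =>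
      Finset.min'_le _ _ (by simp [hl])
    have hagree : ∀ l, l < j → p l = q l := by
      intro l hl
      by_contra h
      exact absurd (hjmin l h) (not_le.2 hl)
    have hpre := pre_of_majorizes hpa hqa hpq
    -- p j > q j
    have hprej : Pre p (↑j : ℕ) = Pre q (↑j : ℕ) := by
      unfold Pre
      apply Finset.sum_congr rfl
      intro l hl
      rw [Finset.mem_filter] at hl
      exact hagree l (by rw [Fin.lt_def]; exact hl.2)
    have hjq : q j < p j := by
      have h1 : Pre q ((↑j : ℕ) + 1) ≤ Pre p ((↑j : ℕ) + 1) := hpre ((↑j : ℕ) + 1) (by have := j.isLt; omega)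
      have h2 : Pre p ((↑j : ℕ) + 1) = Pre p (↑j : ℕ) + p j := by
        have := Pre_succ p j.2
        simpa using this
      have h3 : Pre q ((↑j : ℕ) + 1) = Pre q (↑j : ℕ) + q j := by
        have := Pre_succ q j.2
        simpa using this
      rw [h2, h3, hprej] at h1
      rcases lt_or_eq_of_le (by linarith : q j ≤ p j) with h | h
      · exact h
      · exact absurd h.symm hjmem
    -- the receiving index k
    have hAne : (Finset.univ.filter fun l : Fin n => p l < q l).Nonempty := by
      by_contra h
      rw [Finset.not_nonempty_iff_eq_empty, Finset.filter_eq_empty_iff] at h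
      have hlt : ∑ l, q l < ∑ l, p l :=
        Finset.sum_lt_sum (fun l _ => not_lt.1 (h (Finset.mem_univ l)))
          ⟨j, Finset.mem_univ j, hjq⟩
      have := hpq.2
      linarith
    set k := (Finset.univ.filter fun l : Fin n => p l < q l).min' hAne with hkdef
    have hkmem : p k < q k := by
      have := Finset.min'_mem _ hAne
      rw [Finset.mem_filter] at this
      exact this.2
    have hkmin : ∀ l, p l < q l → k ≤ l := fun l hl =>
      Finset.min'_le _ _ (by simp [hl])
    have hjk : j < k := by
      have h1 : j ≤ k := hjmin k (ne_of_lt hkmem)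
      rcases lt_or_eq_of_le h1 with h | h
      · exact h
      · exfalso; rw [h] at hjq; linarith
    have hqkj : q k ≤ q j := hqa hjk.le
    have hlk : ∀ l, l < k → q l ≤ p l := by
      intro l hl
      by_contra h
      exact absurd (hkmin l (not_le.1 h)) (not_le.2 hl)
    -- the source index m
    have hMne : (Finset.univ.filter fun l : Fin n => q j < p l).Nonempty :=
      ⟨j, by simp [hjq]⟩
    set m := (Finset.univ.filter fun l : Fin n => q j < p l).max' hMne with hmdef
    have hmmem : q j < p m := by
      have := Finset.max'_mem _ hMne
      rw [Finset.mem_filter] at this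
      exact this.2
    have hmmax : ∀ l, q j < p l → l ≤ m := fun l hl =>
      Finset.le_max' _ _ (by simp [hl])
    have hjm : j ≤ m := hmmax j hjq
    have hmlt : ∀ l, m < l → p l ≤ q j := by
      intro l hl
      by_contra h
      exact absurd (hmmax l (not_le.1 h)) (not_le.2 hl)
    have hpk_lt : p k < q j := lt_of_lt_of_le hkmem hqkj
    have hmk : m < k := by
      by_contra h
      push_neg at h
      have : p m ≤ p k := hpa h
      linarith
    have hmkne : m ≠ k := ne_of_lt hmk
    -- the transfer amount
    set δ := min (p m - q j) (q k - p k) with hδdef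
    have hδ0 : 0 < δ := lt_min (by linarith) (by linarith)
    have hδmq : δ ≤ p m - q j := min_le_left _ _
    have hδkp : δ ≤ q k - p k := min_le_right _ _
    have hδmk : δ ≤ p m - p k := by linarith
    set p' := Function.update (Function.update p m (p m - δ)) k (p k + δ) with hp'def
    have hp'm : p' m = p m - δ := by simp [hp'def, Function.update_of_ne hmkne]
    have hp'k : p' k = p k + δ := by simp [hp'def]
    have hp'o : ∀ l, l ≠ m → l ≠ k → p' l = p l := by
      intro l h1 h2
      simp [hp'def, Function.update_of_ne h2, Function.update_of_ne h1]
    have hp'm_ge : q j ≤ p' m := by rw [hp'm]; linarith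
    have hp'k_le : p' k ≤ q k := by rw [hp'k]; linarith
    have hp'k_gt : p k < p' k := by rw [hp'k]; linarith
    -- step inequality
    have hstep : psiSum φ p' ≤ psiSum φ p :=
      step_full φ hφ hmkne p hp hδ0.le hδmk
    -- nonnegativity
    have hp'nn : ∀ v, 0 ≤ p' v := by
      intro v
      by_cases hvm : v = m
      · rw [hvm]; exact le_trans (hq j) hp'm_ge
      · by_cases hvk : v = k
        · rw [hvk, hp'k]; linarith [hp k, hδ0]
        · rw [hp'o v hvm hvk]; exact hp v
    -- antitone
    have hp'a : Antitone p' := by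
      intro x y hxy
      rcases eq_or_lt_of_le hxy with rfl | hxy'
      · exact le_refl _
      by_cases hxm : x = m
      · by_cases hyk : y = k
        · rw [hxm, hyk, hp'm, hp'k]; linarith
        · have hym : y ≠ m := ne_of_gt (hxm ▸ hxy')
          rw [hxm, hp'm, hp'o y hym hyk]
          have h1 : m < y := hxm ▸ hxy'
          have h2 := hmlt y h1
          linarith
      · by_cases hxk : x = k
        · have hky : k < y := hxk ▸ hxy'
          have hym : y ≠ m := ne_of_gt (lt_trans hmk hky)
          have hyk : y ≠ k := ne_of_gt hky
          rw [hxk, hp'k, hp'o y hym hyk]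
          have : p y ≤ p k := hpa hky.le
          linarith
        · rw [hp'o x hxm hxk]
          by_cases hym : y = m
          · rw [hym, hp'm]
            have : p m ≤ p x := hpa (le_of_lt (hym ▸ hxy'))
            linarith
          · by_cases hyk : y = k
            · rw [hyk, hp'k]
              have h1 : q x ≤ p x := hlk x (hyk ▸ hxy')
              have h2 : q k ≤ q x := hqa (le_of_lt (hyk ▸ hxy'))
              linarith
            · rw [hp'o y hym hyk]; exact hpa hxy'.le
    -- majorization p ≻ p' (for the sum identity)
    have hmajpp' : Majorizes p p' :=
      transfer_majorized p hmkne hδ0.le (by linarith : p k + δ ≤ p m)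
    have hsum' : ∑ i, p' i = ∑ i, q i := by
      rw [← hmajpp'.2]; exact hpq.2
    -- majorization p' ≻ q
    have hmaj' : Majorizes p' q := by
      apply majorizes_of_pre hp'a hqa _ hsum'
      intro K hK
      have hKupd := sum_update2 p hmkne δ (Finset.univ.filter fun i : Fin n => (i : ℕ) < K)
      have hmmm : (m ∈ Finset.univ.filter fun i : Fin n => (i : ℕ) < K) ↔ (↑m : ℕ) < K := by
        simp
      have hkkk : (k ∈ Finset.univ.filter fun i : Fin n => (i : ℕ) < K) ↔ (↑k : ℕ) < K := by
        simp
      by_cases hKm : (↑m : ℕ) < K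
      · by_cases hKk : (↑k : ℕ) < K
        · have : Pre p' K = Pre p K := by
            unfold Pre
            rw [hp'def, hKupd, if_pos (hmmm.2 hKm), if_pos (hkkk.2 hKk)]
            ring
          rw [this]
          exact hpre K hK
        · have hPre' : Pre p' K = Pre p K - δ := by
            unfold Pre
            rw [hp'def, hKupd, if_pos (hmmm.2 hKm), if_neg (fun h => hKk (hkkk.1 h))]
            ring
          rw [hPre']
          have hsingle : p m - q m ≤ ∑ l ∈ Finset.univ.filter
              (fun i : Fin n => (i : ℕ) < K), (p l - q l) := by
            refine Finset.single_le_sum (f := fun l => p l - q l) ?_ ?_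
            · intro l hl
              rw [Finset.mem_filter] at hl
              have hlkK : l < k := by
                rw [Fin.lt_def]
                omega
              have h5 := hlk l hlkK
              show 0 ≤ p l - q l
              linarith
            · exact hmmm.2 hKm
          have hsplit : ∑ l ∈ Finset.univ.filter (fun i : Fin n => (i : ℕ) < K),
              (p l - q l) = Pre p K - Pre q K := by
            rw [Finset.sum_sub_distrib]
            rfl
          have hqmj : q m ≤ q j := hqa hjm
          rw [hsplit] at hsingle
          linarith
      · have hKk : ¬ (↑k : ℕ) < K := by
          have : (↑m : ℕ) < (↑k : ℕ) := hmk
          omega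
        have : Pre p' K = Pre p K := by
          unfold Pre
          rw [hp'def, hKupd, if_neg (fun h => hKm (hmmm.1 h)), if_neg (fun h => hKk (hkkk.1 h))]
          ring
        rw [this]
        exact hpre K hK
    -- measure bookkeeping
    have hAsub : (Finset.univ.filter fun l : Fin n => p' l < q l)
        ⊆ (Finset.univ.filter fun l : Fin n => p l < q l) := by
      intro l hl
      rw [Finset.mem_filter] at hl ⊢
      refine ⟨Finset.mem_univ l, ?_⟩
      by_cases hlm : l = m
      · exfalso
        have : q m ≤ q j := hqa hjm
        rw [hlm] at hl
        have := hl.2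
        rw [hp'm] at this
        linarith
      · by_cases hlkk : l = k
        · rw [hlkk]; exact hkmem
        · rw [hp'o l hlm hlkk] at hl; exact hl.2
    have hmu_le : muM p' q ≤ muM p q := Finset.card_le_card hAsub
    have hKset : (Finset.univ.filter fun l : Fin n => ∃ l', l' ≤ l ∧ p l' ≠ q l')
        = Finset.univ.filter fun l : Fin n => j ≤ l := by
      ext l
      simp only [Finset.mem_filter, Finset.mem_univ, true_and]
      constructor
      · rintro ⟨l', h1, h2⟩
        exact le_trans (hjmin l' h2) h1
      · intro h
        exact ⟨j, h, hjmem⟩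
    have hKsub : (Finset.univ.filter fun l : Fin n => ∃ l', l' ≤ l ∧ p' l' ≠ q l')
        ⊆ (Finset.univ.filter fun l : Fin n => ∃ l', l' ≤ l ∧ p l' ≠ q l') := by
      intro l hl
      rw [hKset]
      rw [Finset.mem_filter] at hl ⊢
      refine ⟨Finset.mem_univ l, ?_⟩
      obtain ⟨-, l', h1, h2⟩ := hl
      by_contra h
      push_neg at h
      have hl'j : l' < j := lt_of_le_of_lt h1 h
      have hl'm : l' ≠ m := by
        intro he
        rw [he] at hl'j
        exact absurd hjm (not_le.2 hl'j)
      have hl'k : l' ≠ k := by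
        intro he
        rw [he] at hl'j
        exact absurd (le_of_lt hjk) (not_le.2 hl'j)
      rw [hp'o l' hl'm hl'k] at h2
      exact h2 (hagree l' hl'j)
    have hkap_le : kappaM p' q ≤ kappaM p q := Finset.card_le_card hKsub
    have hkapn : kappaM p' q ≤ n := by
      have := Finset.card_le_univ (Finset.univ.filter
        fun l : Fin n => ∃ l', l' ≤ l ∧ p' l' ≠ q l')
      simpa [kappaM] using this
    have hnun : nuM p' q ≤ n := by
      have := Finset.card_le_univ (Finset.univ.filter fun l : Fin n =>
        ∃ jj : Fin n, (p' jj ≠ q jj ∧ ∀ r, r < jj → p' r = q r) ∧ q jj < p' l)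
      simpa [nuM] using this
    -- case analysis on which min is attained
    have hfinal : (muM p' q * (n + 1) + kappaM p' q) * (n + 1) + nuM p' q ≤ N := by
      by_cases hc1 : δ = q k - p k
      · -- k leaves the μ-set
        have hknot : k ∉ (Finset.univ.filter fun l : Fin n => p' l < q l) := by
          rw [Finset.mem_filter]
          rintro ⟨-, h⟩
          rw [hp'k, hc1] at h
          linarith
        have hmu_lt : muM p' q < muM p q := by
          apply Finset.card_lt_card
          rw [Finset.ssubset_iff_of_subset hAsub]
          exact ⟨k, by simp [hkmem], hknot⟩
        have hb1 : kappaM p q ≤ n := by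
          have := Finset.card_le_univ (Finset.univ.filter
            fun l : Fin n => ∃ l', l' ≤ l ∧ p l' ≠ q l')
          simpa [kappaM] using this
        have hin : muM p' q * (n + 1) + kappaM p' q < muM p q * (n + 1) + kappaM p q :=
          lexA (by omega) hmu_lt
        have hout := lexA (A := n + 1) (v := nuM p q) (by omega : nuM p' q < n + 1) hin
        omega
      · have hδeq : δ = p m - q j := by
          rcases min_cases (p m - q j) (q k - p k) with ⟨h1, -⟩ | ⟨h1, -⟩
          · rw [hδdef]; exact h1
          · exact absurd (hδdef ▸ h1) hc1
        have hp'meq : p' m = q j := by rw [hp'm, hδeq]; ring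
        by_cases hmj : m = j
        · -- the first disagreement is resolved : κ decreases
          have hjnot : j ∉ (Finset.univ.filter
              fun l : Fin n => ∃ l', l' ≤ l ∧ p' l' ≠ q l') := by
            rw [Finset.mem_filter]
            rintro ⟨-, l', h1, h2⟩
            rcases lt_or_eq_of_le h1 with h | h
            · have hl'm : l' ≠ m := by
                intro he
                rw [he] at h
                exact absurd hjm (not_le.2 h)
              have hl'k : l' ≠ k := by
                intro he
                rw [he] at h
                exact absurd (le_of_lt hjk) (not_le.2 h)
              rw [hp'o l' hl'm hl'k] at h2
              exact h2 (hagree l' h)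
            · rw [h] at h2
              apply h2
              rw [← hmj, hp'meq, hmj]
          have hjin : j ∈ (Finset.univ.filter
              fun l : Fin n => ∃ l', l' ≤ l ∧ p l' ≠ q l') := by
            rw [Finset.mem_filter]
            exact ⟨Finset.mem_univ j, j, le_refl j, hjmem⟩
          have hkap_lt : kappaM p' q < kappaM p q := by
            apply Finset.card_lt_card
            rw [Finset.ssubset_iff_of_subset hKsub]
            exact ⟨j, hjin, hjnot⟩
          have hin : muM p' q * (n + 1) + kappaM p' q < muM p q * (n + 1) + kappaM p q :=
            lexB hmu_le hkap_lt
          have hout := lexA (A := n + 1) (v := nuM p q) (by omega : nuM p' q < n + 1) hin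
          omega
        · -- ν decreases
          have hjm' : j < m := lt_of_le_of_ne hjm (fun h => hmj h.symm)
          have hjne_m : j ≠ m := ne_of_lt hjm'
          have hjne_k : j ≠ k := ne_of_lt hjk
          have hp'j : p' j = p j := hp'o j hjne_m hjne_k
          -- p' has the same first disagreement j
          have hMD' : ∀ l : Fin n, (p' l ≠ q l ∧ ∀ r, r < l → p' r = q r) → l = j := by
            intro l ⟨h1, h2⟩
            by_cases hlj : l < j
            · exfalso
              have hlm : l ≠ m := fun he => absurd hjm' (not_lt.2 (le_of_lt (he ▸ hlj)))
              have hlkk : l ≠ k := fun he => absurd hjk (not_lt.2 (le_of_lt (he ▸ hlj)))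
              rw [hp'o l hlm hlkk] at h1
              exact h1 (hagree l hlj)
            · rcases lt_trichotomy l j with h | h | h
              · exact absurd h hlj
              · exact h
              · exfalso
                have := h2 j h
                rw [hp'j] at this
                exact hjmem this
          have hMDp : ∀ l : Fin n, (p l ≠ q l ∧ ∀ r, r < l → p r = q r) → l = j := by
            intro l ⟨h1, h2⟩
            rcases lt_trichotomy l j with h | h | h
            · exact absurd h1 (not_not.2 (hagree l h))
            · exact h
            · exact absurd (h2 j h) hjmem
          have hMDj' : p' j ≠ q j ∧ ∀ r, r < j → p' r = q r := by
            constructor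
            · rw [hp'j]; exact hjmem
            · intro r hr
              have hrm : r ≠ m := fun he => absurd hjm' (not_lt.2 (le_of_lt (he ▸ hr)))
              have hrk : r ≠ k := fun he => absurd hjk (not_lt.2 (le_of_lt (he ▸ hr)))
              rw [hp'o r hrm hrk]
              exact hagree r hr
          have hMDj : p j ≠ q j ∧ ∀ r, r < j → p r = q r := ⟨hjmem, hagree⟩
          have hNset' : (Finset.univ.filter fun l : Fin n =>
              ∃ jj : Fin n, (p' jj ≠ q jj ∧ ∀ r, r < jj → p' r = q r) ∧ q jj < p' l)
              = Finset.univ.filter fun l : Fin n => q j < p' l := by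
            ext l
            simp only [Finset.mem_filter, Finset.mem_univ, true_and]
            constructor
            · rintro ⟨jj, hjj, hlt⟩
              rwa [hMD' jj hjj] at hlt
            · intro h
              exact ⟨j, hMDj', h⟩
          have hNset : (Finset.univ.filter fun l : Fin n =>
              ∃ jj : Fin n, (p jj ≠ q jj ∧ ∀ r, r < jj → p r = q r) ∧ q jj < p l)
              = Finset.univ.filter fun l : Fin n => q j < p l := by
            ext l
            simp only [Finset.mem_filter, Finset.mem_univ, true_and]
            constructor
            · rintro ⟨jj, hjj, hlt⟩
              rwa [hMDp jj hjj] at hlt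
            · intro h
              exact ⟨j, hMDj, h⟩
          have hNsub : (Finset.univ.filter fun l : Fin n => q j < p' l)
              ⊆ (Finset.univ.filter fun l : Fin n => q j < p l) := by
            intro l hl
            rw [Finset.mem_filter] at hl ⊢
            refine ⟨Finset.mem_univ l, ?_⟩
            by_cases hlm : l = m
            · rw [hlm] at hl
              rw [hp'meq] at hl
              exact absurd hl.2 (lt_irrefl _)
            · by_cases hlkk : l = k
              · exfalso
                rw [hlkk] at hl
                have := hl.2
                have h2 := hp'k_le
                linarith
              · rw [hp'o l hlm hlkk] at hl
                exact hl.2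
          have hmnot : m ∉ (Finset.univ.filter fun l : Fin n => q j < p' l) := by
            rw [Finset.mem_filter, hp'meq]
            rintro ⟨-, h⟩
            exact absurd h (lt_irrefl _)
          have hmin : m ∈ (Finset.univ.filter fun l : Fin n => q j < p l) := by
            rw [Finset.mem_filter]
            exact ⟨Finset.mem_univ m, hmmem⟩
          have hnu_lt : nuM p' q < nuM p q := by
            rw [nuM, nuM, hNset', hNset]
            apply Finset.card_lt_card
            rw [Finset.ssubset_iff_of_subset hNsub]
            exact ⟨m, hmin, hmnot⟩
          have hin : muM p' q * (n + 1) + kappaM p' q ≤ muM p q * (n + 1) + kappaM p q :=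
            lexC hmu_le hkap_le
          have hout := lexB (A := n + 1) hin hnu_lt
          omega
    exact le_trans (ih p' hp'a hp'nn hmaj' hfinal) hstep

end Chain

lemma exists_antitone_perm (x : Fin n → ℝ) :
    ∃ σ : Equiv.Perm (Fin n), Antitone (x ∘ σ) := by
  refine ⟨Tuple.sort (fun i => -(x i)), ?_⟩
  have hm := Tuple.monotone_sort (fun i => -(x i))
  intro a b hab
  have h2 := hm hab
  simp only [Function.comp] at h2 ⊢
  linarith

end SchurAux

/-- If `X` is multinomial with `n` trials and probability vector `p`, and
`φ : ℤ^n → ℝ` (here: on nonnegative integer vectors) is Schur-convex, then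
`ψ(p) = E_p[φ(X)]` is a Schur-convex function of `p`. -/
theorem expectation_schurConvex_of_schurConvex {n : ℕ} (hn : 0 < n)
    (φ : (Fin n → ℕ) → ℝ)
    (hφ : ∀ a b : Fin n → ℕ,
      Majorizes (fun i => (a i : ℝ)) (fun i => (b i : ℝ)) → φ b ≤ φ a)
    (p q : Fin n → ℝ) (hp : ∀ i, 0 ≤ p i) (hpsum : ∑ i, p i = 1)
    (hq : ∀ i, 0 ≤ q i) (hqsum : ∑ i, q i = 1)
    (hpq : Majorizes p q) :
    ∑ ω : Fin n → Fin n, (∏ b, q (ω b)) * φ (load ω) ≤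
      ∑ ω : Fin n → Fin n, (∏ b, p (ω b)) * φ (load ω) := by
  classical
  obtain ⟨σ, hσ⟩ := SchurAux.exists_antitone_perm p
  obtain ⟨π, hπ⟩ := SchurAux.exists_antitone_perm q
  have hPQ : Majorizes (p ∘ σ) (q ∘ π) := SchurAux.Majorizes.perm hpq σ π
  have hPnn : ∀ v, 0 ≤ (p ∘ σ) v := fun v => hp (σ v)
  have hQnn : ∀ v, 0 ≤ (q ∘ π) v := fun v => hq (π v)
  have h := SchurAux.chain φ hφ (q ∘ π) hπ hQnn _ (p ∘ σ) hσ hPnn hPQ (le_refl _)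
  have e1 : SchurAux.psiSum φ (q ∘ π) = SchurAux.psiSum φ q :=
    SchurAux.psiSum_comp_perm φ hφ q π
  have e2 : SchurAux.psiSum φ (p ∘ σ) = SchurAux.psiSum φ p :=
    SchurAux.psiSum_comp_perm φ hφ p σ
  have h2 : SchurAux.psiSum φ q ≤ SchurAux.psiSum φ p := by
    rw [← e1, ← e2]; exact h
  exact h2
end

section
/- Let n balls be thrown into n bins independently, each ball landing in bin i with probability p_i for an arbitrary probability vector p. Then the expected maximum load satisfies E_p[max load] ≥ k_0 · log n / log log n as n → ∞, for some absolute constant k_0 > 0. -/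
/-- The maximum bin load. -/
def maxLoad {n : ℕ} (ω : Fin n → Fin n) : ℕ :=
  Finset.univ.sup (load ω)

/-- Expected maximum load when each of `n` balls independently lands in bin `i`
with probability `p i` (the load vector is multinomial `(n, p)`). -/
noncomputable def expMaxLoad {n : ℕ} (p : Fin n → ℝ) : ℝ :=
  ∑ ω : Fin n → Fin n, (∏ b, p (ω b)) * (maxLoad ω : ℝ)

/-! ### Auxiliary machinery -/

open Finset in
/-- Probability of a "per-ball" event factorizes. -/
lemma engine {n : ℕ} (p : Fin n → ℝ) (g : Fin n → Finset (Fin n)) :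
    ∑ ω : Fin n → Fin n, ((∏ b, p (ω b)) * if ∀ b, ω b ∈ g b then (1:ℝ) else 0)
      = ∏ b, ∑ x ∈ g b, p x := by
  have key : ∀ ω : Fin n → Fin n,
      ((∏ b, p (ω b)) * if ∀ b, ω b ∈ g b then (1:ℝ) else 0)
        = ∏ b, (if ω b ∈ g b then p (ω b) else 0) := by
    intro ω
    by_cases h : ∀ b, ω b ∈ g b
    · rw [if_pos h, mul_one]
      exact (Finset.prod_congr rfl fun b _ => by rw [if_pos (h b)]).symm
    · rw [if_neg h, mul_zero]
      push_neg at h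
      obtain ⟨b, hb⟩ := h
      exact (Finset.prod_eq_zero (Finset.mem_univ b) (by rw [if_neg hb])).symm
  simp_rw [key]
  have h2 := Finset.prod_univ_sum (fun _ : Fin n => (Finset.univ : Finset (Fin n)))
    (fun b x => if x ∈ g b then p x else 0)
  rw [Fintype.piFinset_univ] at h2
  rw [← h2]
  refine Finset.prod_congr rfl fun b _ => ?_
  rw [Finset.sum_ite_mem, Finset.univ_inter]

/-- the per-ball constraint sets for the event "all balls of `S` land in bin `i`". -/
def gSI {n : ℕ} (S : Finset (Fin n)) (i : Fin n) : Fin n → Finset (Fin n) :=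
  fun b => if b ∈ S then {i} else Finset.univ

/-- indicator of the event "all balls of `S` land in bin `i`". -/
noncomputable def indSI {n : ℕ} (S : Finset (Fin n)) (i : Fin n) (ω : Fin n → Fin n) : ℝ :=
  if ∀ b, ω b ∈ gSI S i b then 1 else 0

lemma indSI_nonneg {n : ℕ} (S : Finset (Fin n)) (i : Fin n) (ω : Fin n → Fin n) :
    0 ≤ indSI S i ω := by
  unfold indSI; split <;> norm_num

lemma E_indSI {n : ℕ} (p : Fin n → ℝ) (hsum : ∑ i, p i = 1) (S : Finset (Fin n)) (i : Fin n) :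
    ∑ ω : Fin n → Fin n, (∏ b, p (ω b)) * indSI S i ω = p i ^ S.card := by
  unfold indSI
  rw [engine]
  have : ∀ b : Fin n, (∑ x ∈ gSI S i b, p x) = if b ∈ S then p i else 1 := by
    intro b
    unfold gSI
    by_cases hb : b ∈ S
    · rw [if_pos hb, if_pos hb, Finset.sum_singleton]
    · rw [if_neg hb, if_neg hb, hsum]
  simp_rw [this]
  rw [Finset.prod_ite_mem, Finset.univ_inter, Finset.prod_const]

lemma indSI_mul_indSI {n : ℕ} (S T : Finset (Fin n)) (i j : Fin n) (ω : Fin n → Fin n) :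
    indSI S i ω * indSI T j ω
      = if ∀ b, ω b ∈ gSI S i b ∩ gSI T j b then (1:ℝ) else 0 := by
  unfold indSI
  by_cases h : ∀ b, ω b ∈ gSI S i b ∩ gSI T j b
  · have h1 : ∀ b, ω b ∈ gSI S i b := fun b => (Finset.mem_inter.1 (h b)).1
    have h2 : ∀ b, ω b ∈ gSI T j b := fun b => (Finset.mem_inter.1 (h b)).2
    rw [if_pos h1, if_pos h2, if_pos h, mul_one]
  · rw [if_neg h]
    push_neg at h
    obtain ⟨b, hb⟩ := h
    rw [Finset.mem_inter] at hb
    push_neg at hb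
    by_cases h1 : ω b ∈ gSI S i b
    · have h2 : ¬ ∀ b, ω b ∈ gSI T j b := fun hc => hb h1 (hc b)
      rw [if_neg h2, mul_zero]
    · have h1' : ¬ ∀ b, ω b ∈ gSI S i b := fun hc => h1 (hc b)
      rw [if_neg h1', zero_mul]

lemma maxLoad_ge_of_indSI {n m : ℕ} {S : Finset (Fin n)} (hS : S.card = m) {i : Fin n}
    {ω : Fin n → Fin n} (h : indSI S i ω ≠ 0) : m ≤ maxLoad ω := by
  have hall : ∀ b, ω b ∈ gSI S i b := by
    by_contra h'
    unfold indSI at h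
    rw [if_neg h'] at h
    exact h rfl
  have hsub : S ⊆ Finset.univ.filter fun b => ω b = i := by
    intro b hb
    have := hall b
    unfold gSI at this
    rw [if_pos hb, Finset.mem_singleton] at this
    exact Finset.mem_filter.2 ⟨Finset.mem_univ b, this⟩
  calc m = S.card := hS.symm
    _ ≤ load ω i := Finset.card_le_card hsub
    _ ≤ maxLoad ω := Finset.le_sup (Finset.mem_univ i)

lemma q_same {n : ℕ} (p : Fin n → ℝ) (hsum : ∑ i, p i = 1) (S T : Finset (Fin n)) (i : Fin n) :
    (∏ b, ∑ x ∈ gSI S i b ∩ gSI T i b, p x) = p i ^ (S ∪ T).card := by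
  have : ∀ b : Fin n, (∑ x ∈ gSI S i b ∩ gSI T i b, p x) = if b ∈ S ∪ T then p i else 1 := by
    intro b
    unfold gSI
    by_cases hS : b ∈ S <;> by_cases hT : b ∈ T <;>
      simp [hS, hT, Finset.mem_union, hsum]
  simp_rw [this]
  rw [Finset.prod_ite_mem, Finset.univ_inter, Finset.prod_const]

lemma q_disj {n : ℕ} (p : Fin n → ℝ) (hsum : ∑ i, p i = 1) {S T : Finset (Fin n)}
    (hd : Disjoint S T) (i j : Fin n) :
    (∏ b, ∑ x ∈ gSI S i b ∩ gSI T j b, p x) = p i ^ S.card * p j ^ T.card := by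
  have : ∀ b : Fin n, (∑ x ∈ gSI S i b ∩ gSI T j b, p x)
      = (if b ∈ S then p i else 1) * (if b ∈ T then p j else 1) := by
    intro b
    unfold gSI
    by_cases hS : b ∈ S
    · have hT : b ∉ T := Finset.disjoint_left.1 hd hS
      simp [hS, hT]
    · by_cases hT : b ∈ T <;> simp [hS, hT, hsum]
  simp_rw [this]
  rw [Finset.prod_mul_distrib, Finset.prod_ite_mem, Finset.univ_inter, Finset.prod_const,
    Finset.prod_ite_mem, Finset.univ_inter, Finset.prod_const]

lemma q_ne {n : ℕ} (p : Fin n → ℝ) {S T : Finset (Fin n)}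
    (hd : ¬ Disjoint S T) {i j : Fin n} (hij : i ≠ j) :
    (∏ b, ∑ x ∈ gSI S i b ∩ gSI T j b, p x) = 0 := by
  rw [Finset.not_disjoint_iff] at hd
  obtain ⟨b, hbS, hbT⟩ := hd
  refine Finset.prod_eq_zero (Finset.mem_univ b) ?_
  unfold gSI
  rw [if_pos hbS, if_pos hbT]
  have : ({i} : Finset (Fin n)) ∩ {j} = ∅ := by
    ext x; simp only [Finset.mem_inter, Finset.mem_singleton, Finset.notMem_empty, iff_false]
    rintro ⟨rfl, rfl⟩; exact hij rfl
  rw [this, Finset.sum_empty]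

lemma qbound {n m : ℕ} (p : Fin n → ℝ) (hp : ∀ i, 0 ≤ p i) (hsum : ∑ i, p i = 1)
    (hB : ∀ i, p i ≤ (m:ℝ)/n) {S T : Finset (Fin n)} (hS : S.card = m) (hT : T.card = m)
    (i j : Fin n) :
    (∏ b, ∑ x ∈ gSI S i b ∩ gSI T j b, p x)
      ≤ p i ^ m * p j ^ m
        + (if i = j then p i ^ m * ((m:ℝ)/n) ^ (m - (S ∩ T).card) else 0) := by
  by_cases hij : i = j
  · subst hij
    rw [if_pos rfl, q_same p hsum]
    have hk : (S ∩ T).card ≤ m := hS ▸ Finset.card_le_card Finset.inter_subset_left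
    have hcard : (S ∪ T).card = m + (m - (S ∩ T).card) := by
      have := Finset.card_union_add_card_inter S T
      omega
    have h1 : p i ^ (S ∪ T).card ≤ p i ^ m * ((m:ℝ)/n) ^ (m - (S ∩ T).card) := by
      rw [hcard, pow_add]
      exact mul_le_mul_of_nonneg_left
        (pow_le_pow_left₀ (hp i) (hB i) _) (pow_nonneg (hp i) m)
    nlinarith [pow_nonneg (hp i) m, pow_nonneg (hp i) m]
  · rw [if_neg hij, add_zero]
    by_cases hd : Disjoint S T
    · rw [q_disj p hsum hd, hS, hT]
    · rw [q_ne p hd hij]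
      exact mul_nonneg (pow_nonneg (hp i) m) (pow_nonneg (hp j) m)

lemma counting {n m : ℕ} (hm : 1 ≤ m) (hn : 0 < n) {S : Finset (Fin n)} (hS : S.card = m) :
    ∑ T ∈ Finset.powersetCard m (Finset.univ : Finset (Fin n)),
        ((m:ℝ)/n) ^ (m - (S ∩ T).card) ≤ 2^m * (m:ℝ)^m := by
  have hx0 : (0:ℝ) ≤ (m:ℝ)/n := by positivity
  rw [← Finset.sum_fiberwise_of_maps_to
    (g := fun T => S ∩ T) (t := S.powerset)
    (fun T _ => Finset.mem_powerset.2 Finset.inter_subset_left)]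
  have hterm : ∀ A ∈ S.powerset,
      (∑ T ∈ (Finset.powersetCard m (Finset.univ : Finset (Fin n))).filter
          (fun T => S ∩ T = A), ((m:ℝ)/n) ^ (m - (S ∩ T).card)) ≤ (m:ℝ)^m := by
    intro A hA
    set fib := (Finset.powersetCard m (Finset.univ : Finset (Fin n))).filter
      (fun T => S ∩ T = A) with hfib
    have heq : ∀ T ∈ fib, ((m:ℝ)/n) ^ (m - (S ∩ T).card) = ((m:ℝ)/n) ^ (m - A.card) := by
      intro T hT
      rw [(Finset.mem_filter.1 hT).2]
    rw [Finset.sum_congr rfl heq, Finset.sum_const, nsmul_eq_mul]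
    have hcard : fib.card ≤ n ^ (m - A.card) := by
      have hinj : Set.InjOn (fun T => T \ S) fib := by
        intro T1 h1 T2 h2 he
        have e1 : S ∩ T1 = A := (Finset.mem_filter.1 h1).2
        have e2 : S ∩ T2 = A := (Finset.mem_filter.1 h2).2
        have h1' : T1 = T1 \ S ∪ A := by
          rw [← e1, Finset.inter_comm, Finset.sdiff_union_inter]
        have h2' : T2 = T2 \ S ∪ A := by
          rw [← e2, Finset.inter_comm, Finset.sdiff_union_inter]
        simp only at he
        rw [h1', h2', he]
      have hmaps : ∀ T ∈ fib, T \ S ∈ Finset.powersetCard (m - A.card)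
          (Finset.univ : Finset (Fin n)) := by
        intro T hT
        have hTm : T.card = m := (Finset.mem_powersetCard.1 (Finset.mem_filter.1 hT).1).2
        have e1 : S ∩ T = A := (Finset.mem_filter.1 hT).2
        refine Finset.mem_powersetCard.2 ⟨Finset.subset_univ _, ?_⟩
        have := Finset.card_sdiff_add_card_inter T S
        rw [Finset.inter_comm, e1, hTm] at this
        omega
      calc fib.card ≤ (Finset.powersetCard (m - A.card)
            (Finset.univ : Finset (Fin n))).card :=
          Finset.card_le_card_of_injOn _ hmaps hinj
        _ = Nat.choose n (m - A.card) := by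
            rw [Finset.card_powersetCard, Finset.card_univ, Fintype.card_fin]
        _ ≤ n ^ (m - A.card) := Nat.choose_le_pow _ _
    calc (fib.card : ℝ) * ((m:ℝ)/n) ^ (m - A.card)
        ≤ (n:ℝ) ^ (m - A.card) * ((m:ℝ)/n) ^ (m - A.card) := by
          apply mul_le_mul_of_nonneg_right _ (by positivity)
          exact_mod_cast Nat.cast_le.2 hcard
      _ = ((n:ℝ) * ((m:ℝ)/n)) ^ (m - A.card) := by rw [mul_pow]
      _ = (m:ℝ) ^ (m - A.card) := by
          rw [mul_div_cancel₀]
          exact Nat.cast_ne_zero.2 hn.ne'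
      _ ≤ (m:ℝ) ^ m := by
          apply pow_le_pow_right₀ _ (Nat.sub_le _ _)
          exact_mod_cast hm
  calc ∑ A ∈ S.powerset, (∑ T ∈ (Finset.powersetCard m
        (Finset.univ : Finset (Fin n))).filter (fun T => S ∩ T = A),
        ((m:ℝ)/n) ^ (m - (S ∩ T).card))
      ≤ ∑ A ∈ S.powerset, (m:ℝ)^m := Finset.sum_le_sum hterm
    _ = 2^m * (m:ℝ)^m := by
        rw [Finset.sum_const, Finset.card_powerset, hS, nsmul_eq_mul]
        push_cast
        ring


/-- the index set of (bin, m-set of balls) pairs. -/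
def IDX (n m : ℕ) : Finset (Fin n × Finset (Fin n)) :=
  (Finset.univ : Finset (Fin n)) ×ˢ Finset.powersetCard m Finset.univ

lemma card_of_mem_IDX {n m : ℕ} {q : Fin n × Finset (Fin n)} (h : q ∈ IDX n m) :
    q.2.card = m := by
  rw [IDX, Finset.mem_product] at h
  exact (Finset.mem_powersetCard.1 h.2).2

/-- the count statistic: number of (bin, m-set) pairs fully loaded. -/
noncomputable def ZI {n : ℕ} (m : ℕ) (ω : Fin n → Fin n) : ℝ :=
  ∑ q ∈ IDX n m, indSI q.2 q.1 ω

lemma sumI_pow {n : ℕ} (m : ℕ) (p : Fin n → ℝ) :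
    ∑ q ∈ IDX n m, p q.1 ^ m = (Nat.choose n m : ℝ) * ∑ i, p i ^ m := by
  rw [IDX, Finset.sum_product]
  have : ∀ i : Fin n, ∑ S ∈ Finset.powersetCard m (Finset.univ : Finset (Fin n)),
      p i ^ m = (Nat.choose n m : ℝ) * p i ^ m := by
    intro i
    rw [Finset.sum_const, Finset.card_powersetCard, Finset.card_univ, Fintype.card_fin,
      nsmul_eq_mul]
  rw [Finset.sum_congr rfl fun i _ => this i, ← Finset.mul_sum]

lemma E_Z {n : ℕ} (m : ℕ) (p : Fin n → ℝ) (hsum : ∑ i, p i = 1) :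
    ∑ ω : Fin n → Fin n, (∏ b, p (ω b)) * ZI m ω
      = (Nat.choose n m : ℝ) * ∑ i, p i ^ m := by
  unfold ZI
  have key : ∑ ω : Fin n → Fin n, (∏ b, p (ω b)) * ∑ q ∈ IDX n m, indSI q.2 q.1 ω
      = ∑ q ∈ IDX n m, p q.1 ^ m := by
    simp_rw [Finset.mul_sum]
    rw [Finset.sum_comm]
    exact Finset.sum_congr rfl fun q hq => by rw [E_indSI p hsum, card_of_mem_IDX hq]
  rw [key, sumI_pow]

lemma E_Zsq_le {n m : ℕ} (p : Fin n → ℝ) (hp : ∀ i, 0 ≤ p i) (hsum : ∑ i, p i = 1)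
    (hB : ∀ i, p i ≤ (m:ℝ)/n) (hm : 1 ≤ m) (hn : 0 < n) :
    ∑ ω : Fin n → Fin n, (∏ b, p (ω b)) * (ZI m ω)^2
      ≤ ((Nat.choose n m : ℝ) * ∑ i, p i ^ m)^2
        + ((Nat.choose n m : ℝ) * ∑ i, p i ^ m) * (2^m * (m:ℝ)^m) := by
  have step1 : ∑ ω : Fin n → Fin n, (∏ b, p (ω b)) * (ZI m ω)^2
      = ∑ q ∈ IDX n m, ∑ r ∈ IDX n m,
          (∏ b, ∑ x ∈ gSI q.2 q.1 b ∩ gSI r.2 r.1 b, p x) := by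
    have homega : ∀ ω : Fin n → Fin n, (∏ b, p (ω b)) * (ZI m ω)^2
        = ∑ q ∈ IDX n m, ∑ r ∈ IDX n m,
            ((∏ b, p (ω b)) * if ∀ b, ω b ∈ gSI q.2 q.1 b ∩ gSI r.2 r.1 b then (1:ℝ) else 0) := by
      intro ω
      rw [sq, ZI, Finset.sum_mul_sum, Finset.mul_sum]
      refine Finset.sum_congr rfl fun q _ => ?_
      rw [Finset.mul_sum]
      refine Finset.sum_congr rfl fun r _ => ?_
      rw [indSI_mul_indSI]
    rw [Finset.sum_congr rfl fun ω _ => homega ω, Finset.sum_comm]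
    refine Finset.sum_congr rfl fun q _ => ?_
    rw [Finset.sum_comm]
    exact Finset.sum_congr rfl fun r _ => engine p _
  rw [step1]
  have step2 : ∑ q ∈ IDX n m, ∑ r ∈ IDX n m,
      (∏ b, ∑ x ∈ gSI q.2 q.1 b ∩ gSI r.2 r.1 b, p x)
      ≤ ∑ q ∈ IDX n m, ∑ r ∈ IDX n m,
          (p q.1 ^ m * p r.1 ^ m
            + (if q.1 = r.1 then p q.1 ^ m * ((m:ℝ)/n) ^ (m - (q.2 ∩ r.2).card) else 0)) := by
    refine Finset.sum_le_sum fun q hq => Finset.sum_le_sum fun r hr => ?_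
    exact qbound p hp hsum hB (card_of_mem_IDX hq) (card_of_mem_IDX hr) q.1 r.1
  refine step2.trans ?_
  have split : ∑ q ∈ IDX n m, ∑ r ∈ IDX n m,
      (p q.1 ^ m * p r.1 ^ m
        + (if q.1 = r.1 then p q.1 ^ m * ((m:ℝ)/n) ^ (m - (q.2 ∩ r.2).card) else 0))
      = (∑ q ∈ IDX n m, p q.1 ^ m) * (∑ r ∈ IDX n m, p r.1 ^ m)
        + ∑ q ∈ IDX n m, ∑ r ∈ IDX n m,
            (if q.1 = r.1 then p q.1 ^ m * ((m:ℝ)/n) ^ (m - (q.2 ∩ r.2).card) else 0) := by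
    rw [Finset.sum_mul_sum, ← Finset.sum_add_distrib]
    refine Finset.sum_congr rfl fun q _ => ?_
    rw [← Finset.sum_add_distrib]
  rw [split, sumI_pow]
  gcongr ?_ + ?_
  · exact le_of_eq (by rw [sq])
  · -- bound the diagonal part
    have hinner : ∀ q ∈ IDX n m, ∑ r ∈ IDX n m,
        (if q.1 = r.1 then p q.1 ^ m * ((m:ℝ)/n) ^ (m - (q.2 ∩ r.2).card) else 0)
        ≤ p q.1 ^ m * (2^m * (m:ℝ)^m) := by
      intro q hq
      rw [IDX, Finset.sum_product]
      have pull : ∀ j : Fin n, ∑ T ∈ Finset.powersetCard m (Finset.univ : Finset (Fin n)),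
          (if q.1 = j then p q.1 ^ m * ((m:ℝ)/n) ^ (m - (q.2 ∩ T).card) else 0)
          = if q.1 = j then ∑ T ∈ Finset.powersetCard m (Finset.univ : Finset (Fin n)),
              p q.1 ^ m * ((m:ℝ)/n) ^ (m - (q.2 ∩ T).card) else 0 := by
        intro j
        split <;> simp
      rw [Finset.sum_congr rfl fun j _ => pull j, Finset.sum_ite_eq, if_pos (Finset.mem_univ _)]
      rw [← Finset.mul_sum]
      exact mul_le_mul_of_nonneg_left (counting hm hn (card_of_mem_IDX hq))
        (pow_nonneg (hp q.1) m)
    calc ∑ q ∈ IDX n m, ∑ r ∈ IDX n m,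
        (if q.1 = r.1 then p q.1 ^ m * ((m:ℝ)/n) ^ (m - (q.2 ∩ r.2).card) else 0)
        ≤ ∑ q ∈ IDX n m, p q.1 ^ m * (2^m * (m:ℝ)^m) := Finset.sum_le_sum hinner
      _ = ((Nat.choose n m : ℝ) * ∑ i, p i ^ m) * (2^m * (m:ℝ)^m) := by
          rw [← Finset.sum_mul, sumI_pow]

lemma E_load {n : ℕ} (p : Fin n → ℝ) (hsum : ∑ i, p i = 1) (i : Fin n) :
    ∑ ω : Fin n → Fin n, (∏ b, p (ω b)) * (load ω i : ℝ) = n * p i := by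
  have hload : ∀ ω : Fin n → Fin n, ((load ω i : ℕ) : ℝ)
      = ∑ b : Fin n, if ω b = i then (1:ℝ) else 0 := by
    intro ω
    rw [load, Finset.card_filter]
    push_cast
    exact Finset.sum_congr rfl fun b _ => by split <;> norm_num
  have hind : ∀ (b : Fin n) (ω : Fin n → Fin n),
      (if ω b = i then (1:ℝ) else 0) = indSI {b} i ω := by
    intro b ω
    unfold indSI
    refine (if_congr ?_ rfl rfl).symm
    constructor
    · intro h
      have := h b
      unfold gSI at this
      rwa [if_pos (Finset.mem_singleton_self b), Finset.mem_singleton] at this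
    · intro h b'
      unfold gSI
      by_cases hb : b' ∈ ({b} : Finset (Fin n))
      · rw [if_pos hb, Finset.mem_singleton]
        rw [Finset.mem_singleton] at hb
        rw [hb, h]
      · rw [if_neg hb]; exact Finset.mem_univ _
  calc ∑ ω : Fin n → Fin n, (∏ b, p (ω b)) * (load ω i : ℝ)
      = ∑ ω : Fin n → Fin n, ∑ b : Fin n, (∏ b', p (ω b')) * indSI {b} i ω := by
        refine Finset.sum_congr rfl fun ω _ => ?_
        rw [hload, Finset.mul_sum]
        exact Finset.sum_congr rfl fun b _ => by rw [hind]
    _ = ∑ b : Fin n, ∑ ω : Fin n → Fin n, (∏ b', p (ω b')) * indSI {b} i ω :=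
        Finset.sum_comm
    _ = ∑ b : Fin n, p i ^ (({b} : Finset (Fin n)).card) :=
        Finset.sum_congr rfl fun b _ => E_indSI p hsum {b} i
    _ = n * p i := by
        simp [Finset.card_singleton]


lemma caseA_bound {n : ℕ} (p : Fin n → ℝ) (hp : ∀ i, 0 ≤ p i) (hsum : ∑ i, p i = 1)
    (i : Fin n) : (n:ℝ) * p i ≤ expMaxLoad p := by
  rw [← E_load p hsum i, expMaxLoad]
  refine Finset.sum_le_sum fun ω _ => ?_
  have hW : 0 ≤ ∏ b, p (ω b) := Finset.prod_nonneg fun b _ => hp _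
  have hload : load ω i ≤ maxLoad ω := Finset.le_sup (Finset.mem_univ i)
  have : (load ω i : ℝ) ≤ (maxLoad ω : ℝ) := Nat.cast_le.2 hload
  exact mul_le_mul_of_nonneg_left this hW

lemma caseB_bound {n m : ℕ} (p : Fin n → ℝ) (hp : ∀ i, 0 ≤ p i) (hsum : ∑ i, p i = 1)
    (hB : ∀ i, p i ≤ (m:ℝ)/n) (hm : 1 ≤ m) (hn : 0 < n)
    (hKres : 2 * (2^m * (m:ℝ)^m) ≤ (Nat.choose n m : ℝ) * ∑ i, p i ^ m) :
    (2/3 : ℝ) * m ≤ expMaxLoad p := by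
  set μ := (Nat.choose n m : ℝ) * ∑ i, p i ^ m with hμdef
  have hW0 : ∀ ω : Fin n → Fin n, 0 ≤ ∏ b, p (ω b) :=
    fun ω => Finset.prod_nonneg fun b _ => hp _
  have hμ0 : 0 < μ := by
    refine lt_of_lt_of_le ?_ hKres
    have : (0:ℝ) < (m:ℝ)^m := by positivity
    positivity
  set PA := ∑ ω : Fin n → Fin n, (∏ b, p (ω b)) * (if m ≤ maxLoad ω then (1:ℝ) else 0)
    with hPAdef
  have hPA0 : 0 ≤ PA := by
    refine Finset.sum_nonneg fun ω _ => mul_nonneg (hW0 ω) ?_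
    split <;> norm_num
  -- Z vanishes off the event {maxLoad ≥ m}
  have hZvan : ∀ ω : Fin n → Fin n,
      (if m ≤ maxLoad ω then (1:ℝ) else 0) * ZI m ω = ZI m ω := by
    intro ω
    by_cases h : m ≤ maxLoad ω
    · rw [if_pos h, one_mul]
    · rw [if_neg h, zero_mul]
      symm
      refine Finset.sum_eq_zero fun q hq => ?_
      by_contra hne
      exact h (maxLoad_ge_of_indSI (card_of_mem_IDX hq) hne)
  -- Cauchy–Schwarz
  have hCS := Finset.sum_mul_sq_le_sq_mul_sq Finset.univ
    (fun ω : Fin n → Fin n => Real.sqrt (∏ b, p (ω b)) * (if m ≤ maxLoad ω then (1:ℝ) else 0))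
    (fun ω : Fin n → Fin n => Real.sqrt (∏ b, p (ω b)) * ZI m ω)
  have hfg : ∀ ω : Fin n → Fin n,
      (Real.sqrt (∏ b, p (ω b)) * (if m ≤ maxLoad ω then (1:ℝ) else 0))
        * (Real.sqrt (∏ b, p (ω b)) * ZI m ω)
      = (∏ b, p (ω b)) * ZI m ω := by
    intro ω
    rw [show (Real.sqrt (∏ b, p (ω b)) * (if m ≤ maxLoad ω then (1:ℝ) else 0))
        * (Real.sqrt (∏ b, p (ω b)) * ZI m ω)
        = (Real.sqrt (∏ b, p (ω b)) * Real.sqrt (∏ b, p (ω b)))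
          * ((if m ≤ maxLoad ω then (1:ℝ) else 0) * ZI m ω) by ring,
      Real.mul_self_sqrt (hW0 ω), hZvan ω]
  have hfsq : ∀ ω : Fin n → Fin n,
      (Real.sqrt (∏ b, p (ω b)) * (if m ≤ maxLoad ω then (1:ℝ) else 0))^2
      = (∏ b, p (ω b)) * (if m ≤ maxLoad ω then (1:ℝ) else 0) := by
    intro ω
    rw [mul_pow, Real.sq_sqrt (hW0 ω)]
    congr 1
    split <;> norm_num
  have hgsq : ∀ ω : Fin n → Fin n,
      (Real.sqrt (∏ b, p (ω b)) * ZI m ω)^2 = (∏ b, p (ω b)) * (ZI m ω)^2 := by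
    intro ω
    rw [mul_pow, Real.sq_sqrt (hW0 ω)]
  rw [Finset.sum_congr rfl fun ω _ => hfg ω, E_Z m p hsum, ← hμdef,
    Finset.sum_congr rfl fun ω _ => hfsq ω, ← hPAdef,
    Finset.sum_congr rfl fun ω _ => hgsq ω] at hCS
  have hEZ2 := E_Zsq_le p hp hsum hB hm hn
  rw [← hμdef] at hEZ2
  -- deduce 2/3 ≤ PA
  have hPA23 : (2/3 : ℝ) ≤ PA := by
    have h1 : μ^2 ≤ PA * (μ^2 + μ * (μ/2)) := by
      have h2 : μ * (2^m * (m:ℝ)^m) ≤ μ * (μ/2) := by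
        apply mul_le_mul_of_nonneg_left _ hμ0.le
        linarith [hKres]
      calc μ^2 ≤ PA * ∑ ω : Fin n → Fin n, (∏ b, p (ω b)) * (ZI m ω)^2 := hCS
        _ ≤ PA * (μ^2 + μ * (2^m * (m:ℝ)^m)) := by
            apply mul_le_mul_of_nonneg_left hEZ2 hPA0
        _ ≤ PA * (μ^2 + μ * (μ/2)) := by
            apply mul_le_mul_of_nonneg_left _ hPA0
            linarith
    nlinarith [sq_nonneg μ, mul_pos hμ0 hμ0]
  -- conclude
  calc (2/3 : ℝ) * m ≤ PA * m := mul_le_mul_of_nonneg_right hPA23 (Nat.cast_nonneg m)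
    _ = ∑ ω : Fin n → Fin n, (∏ b, p (ω b)) * ((if m ≤ maxLoad ω then (1:ℝ) else 0) * m) := by
        rw [hPAdef, Finset.sum_mul]
        exact Finset.sum_congr rfl fun ω _ => by ring
    _ ≤ expMaxLoad p := by
        refine Finset.sum_le_sum fun ω _ => ?_
        refine mul_le_mul_of_nonneg_left ?_ (hW0 ω)
        by_cases h : m ≤ maxLoad ω
        · rw [if_pos h, one_mul]
          exact_mod_cast Nat.cast_le.2 h
        · rw [if_neg h, zero_mul]
          exact Nat.cast_nonneg _

set_option maxHeartbeats 1600000 in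
open Real in
/-- For `n` balls thrown independently into `n` bins according to an arbitrary
probability vector `p`, the expected maximum load is at least
`k₀ · log n / log log n` for an absolute constant `k₀ > 0`, as `n → ∞`. -/
theorem expMaxLoad_lower_bound :
    ∃ k₀ > (0:ℝ), ∃ N : ℕ, ∀ n ≥ N, ∀ p : Fin n → ℝ,
      (∀ i, 0 ≤ p i) → ∑ i, p i = 1 →
      expMaxLoad p ≥ k₀ * (log n / log (log n)) := by
  refine ⟨1/100, by norm_num, ?_⟩
  have hev : ∀ᶠ n : ℕ in Filter.atTop,
      256 ≤ n ∧ 1 ≤ Real.log (Real.log n) ∧ Real.log (Real.log n) ≤ Real.log n / 5 := by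
    refine (Filter.eventually_atTop.2 ⟨256, fun n hn => hn⟩).and (Filter.Eventually.and ?_ ?_)
    · have h1 : Filter.Tendsto (fun n : ℕ => Real.log (Real.log n)) Filter.atTop Filter.atTop :=
        (Real.tendsto_log_atTop.comp Real.tendsto_log_atTop).comp tendsto_natCast_atTop_atTop
      exact h1.eventually_ge_atTop 1
    · have h2 : (fun x : ℝ => Real.log (Real.log x)) =o[Filter.atTop] fun x => Real.log x :=
        Real.isLittleO_log_id_atTop.comp_tendsto Real.tendsto_log_atTop
      have h3 := h2.def (by norm_num : (0:ℝ) < 1/5)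
      have h4 := tendsto_natCast_atTop_atTop.eventually h3
      have h5 : ∀ᶠ n : ℕ in Filter.atTop, (1:ℝ) ≤ (n:ℝ) :=
        tendsto_natCast_atTop_atTop.eventually_ge_atTop 1
      filter_upwards [h4, h5] with n hn hn1
      have hL0 : 0 ≤ Real.log n := Real.log_nonneg hn1
      calc Real.log (Real.log n) ≤ ‖Real.log (Real.log n)‖ := le_abs_self _
        _ ≤ 1/5 * ‖Real.log n‖ := hn
        _ = Real.log n / 5 := by rw [Real.norm_eq_abs, abs_of_nonneg hL0]; ring
  obtain ⟨N, hN⟩ := Filter.eventually_atTop.1 hev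
  refine ⟨N, fun n hn p hp hsum => ?_⟩
  obtain ⟨hn256, hLL1, hLL5⟩ := hN n hn
  rw [ge_iff_le]
  set L := Real.log n with hLdef
  set LL := Real.log L with hLLdef
  have hn0 : 0 < n := by omega
  have hnR : (256:ℝ) ≤ (n:ℝ) := by exact_mod_cast hn256
  have hnR0 : (0:ℝ) < (n:ℝ) := by positivity
  have hL0 : 0 < L := Real.log_pos (by exact_mod_cast (by omega : 1 < n))
  have hLL0 : (0:ℝ) < LL := by linarith
  have hL2 : 2 ≤ L := by
    have h1 : Real.exp 1 ≤ Real.exp LL := Real.exp_le_exp.2 hLL1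
    rw [hLLdef, Real.exp_log hL0] at h1
    linarith [Real.add_one_le_exp 1]
  set m := ⌊L / (4 * LL)⌋₊ with hmdef
  have hx0 : 0 < L / (4 * LL) := by positivity
  have hm1 : 1 ≤ m := by
    apply Nat.le_floor
    rw [Nat.cast_one, le_div_iff₀ (by positivity)]
    linarith
  have hm0R : (1:ℝ) ≤ (m:ℝ) := by exact_mod_cast hm1
  have hmle : (m:ℝ) ≤ L / (4*LL) := Nat.floor_le hx0.le
  have hmlb : L / (4*LL) - 1 ≤ (m:ℝ) := by
    have := Nat.lt_floor_add_one (L / (4*LL))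
    rw [← hmdef] at this
    linarith
  have hmLL : L/4 - LL ≤ (m:ℝ)*LL := by
    have h' : (L/(4*LL) - 1)*LL ≤ (m:ℝ)*LL := mul_le_mul_of_nonneg_right hmlb hLL0.le
    have he : (L/(4*LL))*LL = L/4 := by field_simp
    nlinarith
  have hmLL' : (m:ℝ)*LL ≤ L/4 := by
    have h' : (m:ℝ)*LL ≤ (L/(4*LL))*LL := mul_le_mul_of_nonneg_right hmle hLL0.le
    have he : (L/(4*LL))*LL = L/4 := by field_simp
    linarith
  have hm1L : (m:ℝ) + 1 ≤ L := by
    have h1 : (m:ℝ) ≤ L/4 := by nlinarith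
    linarith
  -- the key size bound:  4 * (m+1)^(3m) ≤ n
  set s := Real.exp (L/4) with hsdef
  have hs0 : 0 < s := Real.exp_pos _
  have hs4 : s^4 = (n:ℝ) := by
    have h4 : ((4:ℕ):ℝ) * (L/4) = L := by push_cast; ring
    rw [hsdef, ← Real.exp_nat_mul, h4, hLdef, Real.exp_log hnR0]
  have hs4' : (4:ℝ) ≤ s := by
    by_contra hcon
    push_neg at hcon
    have : s^4 < 4^4 := by
      apply pow_lt_pow_left₀ hcon hs0.le
      norm_num
    rw [hs4] at this
    norm_num at this
    linarith
  have hcube : ((m:ℝ)+1)^(3*m) ≤ s^3 := by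
    have h1 : ((m:ℝ)+1)^(3*m) ≤ L^(3*m) :=
      pow_le_pow_left₀ (by positivity) hm1L _
    have h2 : L^(3*m) = Real.exp (((3*m : ℕ):ℝ) * LL) := by
      rw [Real.exp_nat_mul, hLLdef, Real.exp_log hL0]
    have h3 : ((3*m : ℕ):ℝ) * LL ≤ 3*(L/4) := by
      push_cast
      nlinarith
    have h4 : s^3 = Real.exp ((3:ℕ) * (L/4)) := by
      rw [Real.exp_nat_mul]
    calc ((m:ℝ)+1)^(3*m) ≤ L^(3*m) := h1
      _ = Real.exp (((3*m : ℕ):ℝ) * LL) := h2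
      _ ≤ Real.exp ((3:ℕ) * (L/4)) := by
          apply Real.exp_le_exp.2
          push_cast
          linarith [h3]
      _ = s^3 := h4.symm
  have hkey : 4 * ((m:ℝ)+1)^(3*m) ≤ (n:ℝ) := by
    calc 4 * ((m:ℝ)+1)^(3*m) ≤ 4 * s^3 := by linarith [hcube]
      _ ≤ s * s^3 := mul_le_mul_of_nonneg_right hs4' (by positivity)
      _ = s^4 := by ring
      _ = (n:ℝ) := hs4
  have hmn : m ≤ n := by
    have h1 : ((m:ℝ)+1) ≤ ((m:ℝ)+1)^(3*m) := by
      apply le_self_pow₀ (by linarith)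
      omega
    have : (m:ℝ) ≤ (n:ℝ) := by nlinarith
    exact_mod_cast this
  have hmnR : (m:ℝ) ≤ (n:ℝ) := by exact_mod_cast hmn
  -- the common final numeric bound
  have hfinal : 1/100 * (L/LL) ≤ (2/3) * (m:ℝ) := by
    have h1 : L/LL ≤ 20*(m:ℝ) := by
      rw [div_le_iff₀ hLL0]
      nlinarith
    linarith
  by_cases hA : ∃ i, (m:ℝ)/n ≤ p i
  · -- some bin has large probability
    obtain ⟨i, hi⟩ := hA
    have h1 : (m:ℝ) ≤ (n:ℝ) * p i := by
      have := mul_le_mul_of_nonneg_left hi hnR0.le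
      rwa [mul_div_cancel₀ _ hnR0.ne'] at this
    have h2 := caseA_bound p hp hsum i
    calc 1/100 * (L/LL) ≤ (2/3) * (m:ℝ) := hfinal
      _ ≤ (m:ℝ) := by linarith
      _ ≤ (n:ℝ) * p i := h1
      _ ≤ expMaxLoad p := h2
  · -- all bins have small probability: second moment method
    push_neg at hA
    have hB : ∀ i, p i ≤ (m:ℝ)/n := fun i => (hA i).le
    -- lower bound on the power sum
    have hssum : 1/(n:ℝ)^(m-1) ≤ ∑ i, p i ^ m := by
      obtain ⟨m', hm'⟩ : ∃ m', m = m' + 1 := ⟨m-1, by omega⟩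
      have h1 := pow_sum_div_card_le_sum_pow (s := Finset.univ) (f := p)
        (fun i _ => hp i) m'
      rw [hsum, one_pow, Finset.card_univ, Fintype.card_fin] at h1
      rw [hm']
      simpa using h1
    -- lower bound on the binomial coefficient
    have hchoose : ((n:ℝ) - m)^m / (m:ℝ)^m ≤ (Nat.choose n m : ℝ) := by
      have h1 := Nat.pow_le_choose (α := ℝ) m n
      refine le_trans ?_ h1
      have hnum : ((n:ℝ) - m)^m ≤ (((n + 1 - m : ℕ) : ℝ)) ^ m := by
        rw [Nat.cast_sub (by omega : m ≤ n + 1)]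
        apply pow_le_pow_left₀ (by linarith)
        push_cast
        linarith
      have hden : ((m.factorial : ℕ) : ℝ) ≤ (m:ℝ)^m := by
        exact_mod_cast Nat.factorial_le_pow m
      apply div_le_div₀ (by positivity) hnum
        (by exact_mod_cast m.factorial_pos) hden
    -- Bernoulli bound
    have h2m2 : 2*(m:ℝ)^2 ≤ (n:ℝ) := by
      have hp2 : ((m:ℝ)+1)^2 ≤ ((m:ℝ)+1)^(3*m) :=
        pow_le_pow_right₀ (by linarith) (by omega)
      nlinarith
    have hbern : (n:ℝ)^m / 2 ≤ ((n:ℝ) - m)^m := by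
      have hmn1 : (m:ℝ)/n ≤ 1 := by
        rw [div_le_one hnR0]; exact hmnR
      have hb := one_add_mul_le_pow (show (-2:ℝ) ≤ -((m:ℝ)/n) by
        have : 0 ≤ (m:ℝ)/n := by positivity
        linarith) m
      have hlhs : (1:ℝ)/2 ≤ 1 + (m:ℝ) * -((m:ℝ)/n) := by
        have : (m:ℝ) * ((m:ℝ)/n) ≤ 1/2 := by
          rw [mul_div_assoc', div_le_iff₀ hnR0]
          nlinarith
        linarith
      have heq : (1 + -((m:ℝ)/n))^m = ((n:ℝ)-m)^m / (n:ℝ)^m := by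
        rw [← div_pow]
        congr 1
        field_simp
        ring
      have h5 : (1:ℝ)/2 ≤ ((n:ℝ)-m)^m / (n:ℝ)^m := by
        rw [← heq]
        exact hlhs.trans hb
      rw [le_div_iff₀ (pow_pos hnR0 m)] at h5
      linarith
    have hchoose2 : (n:ℝ)/(2*(m:ℝ)^m) ≤ (Nat.choose n m : ℝ) * ∑ i, p i ^ m := by
      have hMm0 : (0:ℝ) < (m:ℝ)^m := by positivity
      have hNm0 : (0:ℝ) < (n:ℝ)^(m-1) := by positivity
      have hstep : ((n:ℝ)^m/2) / (m:ℝ)^m * (1/(n:ℝ)^(m-1))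
          ≤ (Nat.choose n m : ℝ) * ∑ i, p i ^ m := by
        apply mul_le_mul _ hssum (by positivity) (Nat.cast_nonneg _)
        exact le_trans (div_le_div_of_nonneg_right hbern hMm0.le) hchoose
      refine le_trans (le_of_eq ?_) hstep
      have hnm : (n:ℝ)^m = (n:ℝ)^(m-1) * n := by
        rw [← pow_succ]
        congr 1
        omega
      rw [hnm]
      field_simp
    have hKres : 2 * (2^m * (m:ℝ)^m) ≤ (Nat.choose n m : ℝ) * ∑ i, p i ^ m := by
      refine le_trans ?_ hchoose2
      rw [le_div_iff₀ (by positivity : (0:ℝ) < 2*(m:ℝ)^m)]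
      have e2 : (2*((2:ℝ)^m*(m:ℝ)^m))*(2*(m:ℝ)^m) = 4*(2*(m:ℝ)^2)^m := by
        have e3 : ((m:ℝ)^2)^m = (m:ℝ)^m*(m:ℝ)^m := by
          rw [← pow_mul, two_mul, pow_add]
        rw [mul_pow, e3]
        ring
      rw [e2]
      have h3 : (2*(m:ℝ)^2) ≤ ((m:ℝ)+1)^3 := by nlinarith
      have h4 : (2*(m:ℝ)^2)^m ≤ ((m:ℝ)+1)^(3*m) := by
        rw [pow_mul]
        exact pow_le_pow_left₀ (by positivity) h3 m
      nlinarith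
    have hfin2 := caseB_bound p hp hsum hB hm1 hn0 hKres
    calc 1/100*(L/LL) ≤ 2/3*(m:ℝ) := hfinal
      _ ≤ expMaxLoad p := hfin2
end
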